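/- arXiv:2206.07159 — 4 statements merged into one kernel-verified Lean document; each statement's English description precedes it below -/
import Mathlib

section
/- For every Hurst parameter H ∈ (0,1), the kernel R_H is positive semidefinite on [0,∞): for every n ∈ ℕ, all points t_1, …, t_n ∈ [0,∞) and all real numbers c_1, …, c_n, one has Σ_{i=1}^{n} Σ_{j=1}^{n} c_i c_j R_H(t_i, t_j) ≥ 0. -/
open MeasureTheory Real Set

namespace FBMposDef

/-- `K p = ∫_0^∞ (1 - cos ξ) ξ^(-p) dξ`. -/
noncomputable def K (p : ℝ) : ℝ := ∫ ξ in Ioi (0:ℝ), (1 - Real.cos ξ) * ξ ^ (-p)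

/-- `F p x = ∫_0^∞ (1 - cos (xξ)) ξ^(-p) dξ`. -/
noncomputable def F (p x : ℝ) : ℝ := ∫ ξ in Ioi (0:ℝ), (1 - Real.cos (x * ξ)) * ξ ^ (-p)

lemma integrable_aux {p : ℝ} (hp1 : 1 < p) (hp3 : p < 3) (x : ℝ) :
    IntegrableOn (fun ξ : ℝ => (1 - Real.cos (x * ξ)) * ξ ^ (-p)) (Ioi (0:ℝ)) := by
  have hmeas : Measurable (fun ξ : ℝ => (1 - Real.cos (x * ξ)) * ξ ^ (-p)) := by
    fun_prop
  have h0 : IntegrableOn (fun ξ : ℝ => (1 - Real.cos (x * ξ)) * ξ ^ (-p)) (Ioo (0:ℝ) 1) := by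
    have hg : IntegrableOn (fun ξ : ℝ => x ^ 2 / 2 * ξ ^ (2 - p)) (Ioo (0:ℝ) 1) := by
      exact ((intervalIntegral.integrableOn_Ioo_rpow_iff one_pos).2 (by linarith)).const_mul _
    refine Integrable.mono hg hmeas.aestronglyMeasurable ?_
    filter_upwards [ae_restrict_mem measurableSet_Ioo] with ξ hξ
    have hξ0 : (0:ℝ) < ξ := hξ.1
    have h1 : 0 ≤ 1 - Real.cos (x * ξ) := by
      have := Real.cos_le_one (x * ξ); linarith
    have h2 : 1 - Real.cos (x * ξ) ≤ (x * ξ) ^ 2 / 2 := by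
      have := Real.one_sub_sq_div_two_le_cos (x := x * ξ); linarith
    have hrp : (0:ℝ) < ξ ^ (-p) := Real.rpow_pos_of_pos hξ0 _
    rw [Real.norm_eq_abs, Real.norm_eq_abs, abs_of_nonneg (mul_nonneg h1 hrp.le)]
    have key : (x * ξ) ^ 2 / 2 * ξ ^ (-p) = x ^ 2 / 2 * ξ ^ (2 - p) := by
      rw [show (2 - p) = 2 + (-p) by ring, Real.rpow_add hξ0,
        Real.rpow_two]
      ring
    calc (1 - Real.cos (x * ξ)) * ξ ^ (-p) ≤ (x * ξ) ^ 2 / 2 * ξ ^ (-p) :=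
          mul_le_mul_of_nonneg_right h2 hrp.le
      _ = x ^ 2 / 2 * ξ ^ (2 - p) := key
      _ ≤ |x ^ 2 / 2 * ξ ^ (2 - p)| := le_abs_self _

  have h1 : IntegrableOn (fun ξ : ℝ => (1 - Real.cos (x * ξ)) * ξ ^ (-p)) (Ici (1:ℝ)) := by
    rw [integrableOn_Ici_iff_integrableOn_Ioi]
    have hg : IntegrableOn (fun ξ : ℝ => 2 * ξ ^ (-p)) (Ioi (1:ℝ)) :=
      (integrableOn_Ioi_rpow_of_lt (by linarith) one_pos).const_mul 2
    refine Integrable.mono hg hmeas.aestronglyMeasurable ?_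
    filter_upwards [ae_restrict_mem measurableSet_Ioi] with ξ hξ
    have hξ0 : (0:ℝ) < ξ := lt_trans one_pos hξ
    have h1' : 0 ≤ 1 - Real.cos (x * ξ) := by
      have := Real.cos_le_one (x * ξ); linarith
    have h2' : 1 - Real.cos (x * ξ) ≤ 2 := by
      have := Real.neg_one_le_cos (x * ξ); linarith
    have hrp : (0:ℝ) < ξ ^ (-p) := Real.rpow_pos_of_pos hξ0 _
    rw [Real.norm_eq_abs, Real.norm_eq_abs, abs_of_nonneg (mul_nonneg h1' hrp.le)]
    calc (1 - Real.cos (x * ξ)) * ξ ^ (-p) ≤ 2 * ξ ^ (-p) :=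
          mul_le_mul_of_nonneg_right h2' hrp.le
      _ ≤ |2 * ξ ^ (-p)| := le_abs_self _
  have : Ioo (0:ℝ) 1 ∪ Ici 1 = Ioi 0 := Ioo_union_Ici_eq_Ioi one_pos
  rw [← this]
  exact h0.union h1

lemma K_integrable {p : ℝ} (hp1 : 1 < p) (hp3 : p < 3) :
    IntegrableOn (fun ξ : ℝ => (1 - Real.cos ξ) * ξ ^ (-p)) (Ioi (0:ℝ)) := by
  simpa using integrable_aux hp1 hp3 1

lemma K_pos {p : ℝ} (hp1 : 1 < p) (hp3 : p < 3) : 0 < K p := by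
  have hint := K_integrable hp1 hp3
  have hnonneg : ∀ ξ ∈ Ioi (0:ℝ), 0 ≤ (1 - Real.cos ξ) * ξ ^ (-p) := by
    intro ξ hξ
    have := Real.cos_le_one ξ
    exact mul_nonneg (by linarith) (Real.rpow_pos_of_pos hξ _).le
  have hsub : Ioc (1:ℝ) 2 ⊆ Ioi (0:ℝ) := fun ξ hξ => lt_trans one_pos hξ.1
  have hle : (∫ ξ in Ioc (1:ℝ) 2, (1 - Real.cos ξ) * ξ ^ (-p)) ≤ K p := by
    refine setIntegral_mono_set hint ?_ (HasSubset.Subset.eventuallyLE hsub)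
    filter_upwards [ae_restrict_mem measurableSet_Ioi] with ξ hξ using hnonneg ξ hξ
  have hii : IntervalIntegrable (fun ξ : ℝ => (1 - Real.cos ξ) * ξ ^ (-p)) volume 1 2 := by
    rw [intervalIntegrable_iff, uIoc_of_le (by norm_num : (1:ℝ) ≤ 2)]
    exact hint.mono_set hsub
  have hpos : (0:ℝ) < ∫ ξ in (1:ℝ)..2, (1 - Real.cos ξ) * ξ ^ (-p) := by
    refine intervalIntegral.intervalIntegral_pos_of_pos_on hii ?_ one_lt_two
    intro ξ hξ
    obtain ⟨hξ1, hξ2⟩ := hξ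
    have hξ0 : (0:ℝ) < ξ := lt_trans one_pos hξ1
    have hcos : Real.cos ξ < 1 := by
      rcases lt_or_eq_of_le (Real.cos_le_one ξ) with h | h
      · exact h
      · exfalso
        have hπ := Real.pi_gt_three
        have := (Real.cos_eq_one_iff_of_lt_of_lt (by linarith) (by linarith)).1 h
        linarith
    exact mul_pos (by linarith) (Real.rpow_pos_of_pos hξ0 _)
  have : (∫ ξ in (1:ℝ)..2, (1 - Real.cos ξ) * ξ ^ (-p)) =
      ∫ ξ in Ioc (1:ℝ) 2, (1 - Real.cos ξ) * ξ ^ (-p) :=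
    intervalIntegral.integral_of_le (by norm_num)
  linarith [this ▸ hpos]

lemma F_scaling {p : ℝ} {x : ℝ} (hx : 0 < x) : F p x = x ^ (p - 1) * K p := by
  have step1 : F p x = ∫ ξ in Ioi (0:ℝ),
      (fun u : ℝ => (1 - Real.cos u) * u ^ (-p) * x ^ p) (x * ξ) := by
    refine setIntegral_congr_fun measurableSet_Ioi fun ξ hξ => ?_
    have hξ0 : (0:ℝ) < ξ := hξ
    simp only
    rw [Real.mul_rpow hx.le hξ0.le]
    have hxx : x ^ (-p) * x ^ p = 1 := by
      rw [← Real.rpow_add hx]; simp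
    calc (1 - Real.cos (x * ξ)) * ξ ^ (-p)
        = (1 - Real.cos (x * ξ)) * ξ ^ (-p) * (x ^ (-p) * x ^ p) := by rw [hxx, mul_one]
      _ = (1 - Real.cos (x * ξ)) * (x ^ (-p) * ξ ^ (-p)) * x ^ p := by ring
  have h2 := MeasureTheory.integral_comp_mul_left_Ioi
      (fun u : ℝ => (1 - Real.cos u) * u ^ (-p) * x ^ p) 0 hx
  rw [mul_zero] at h2
  have hxne : x ≠ 0 := hx.ne'
  rw [step1, h2, MeasureTheory.integral_mul_const, smul_eq_mul, Real.rpow_sub hx,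
    Real.rpow_one]
  unfold K
  field_simp

lemma F_zero (p : ℝ) : F p 0 = 0 := by
  unfold F; simp

lemma F_neg (p x : ℝ) : F p (-x) = F p x := by
  unfold F
  congr 1
  funext ξ
  rw [neg_mul, Real.cos_neg]

lemma F_abs {p : ℝ} (x : ℝ) (hp1 : 1 < p) : F p x = |x| ^ (p - 1) * K p := by
  rcases lt_trichotomy x 0 with h | h | h
  · rw [← F_neg, F_scaling (by linarith : (0:ℝ) < -x), abs_of_neg h]
  · subst h; rw [F_zero, abs_zero, Real.zero_rpow (by linarith), zero_mul]
  · rw [F_scaling h, abs_of_pos h]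

/-- The per-pair integrand. -/
noncomputable def g (p : ℝ) {n : ℕ} (t c : Fin n → ℝ) (q : Fin n × Fin n) (ξ : ℝ) : ℝ :=
  c q.1 * c q.2 * (((1 - Real.cos (t q.1 * ξ)) + (1 - Real.cos (t q.2 * ξ))
    - (1 - Real.cos ((t q.1 - t q.2) * ξ))) * ξ ^ (-p))

lemma sum_F_nonneg {p : ℝ} (hp1 : 1 < p) (hp3 : p < 3) {n : ℕ} (t c : Fin n → ℝ) :
    0 ≤ ∑ i : Fin n, ∑ j : Fin n,
      c i * c j * (F p (t i) + F p (t j) - F p (t i - t j)) := by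
  have hint := fun x => integrable_aux hp1 hp3 (p := p) x
  have hgint : ∀ q : Fin n × Fin n, IntegrableOn (g p t c q) (Ioi (0:ℝ)) := by
    intro q
    have h := (((hint (t q.1)).add (hint (t q.2))).sub (hint (t q.1 - t q.2))).const_mul
      (c q.1 * c q.2)
    refine IntegrableOn.congr_fun h (fun ξ _ => ?_) measurableSet_Ioi
    simp only [Pi.add_apply, Pi.sub_apply]
    unfold g
    ring
  have hgval : ∀ q : Fin n × Fin n, (∫ ξ in Ioi (0:ℝ), g p t c q ξ)
      = c q.1 * c q.2 * (F p (t q.1) + F p (t q.2) - F p (t q.1 - t q.2)) := by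
    intro q
    have : (g p t c q) = fun ξ => (c q.1 * c q.2) *
        ((1 - Real.cos (t q.1 * ξ)) * ξ ^ (-p) + (1 - Real.cos (t q.2 * ξ)) * ξ ^ (-p)
          - (1 - Real.cos ((t q.1 - t q.2) * ξ)) * ξ ^ (-p)) := by
      funext ξ; unfold g; ring
    rw [this, MeasureTheory.integral_const_mul]
    congr 1
    rw [MeasureTheory.integral_sub (by exact (hint (t q.1)).add (hint (t q.2)))
        (hint (t q.1 - t q.2)),
      MeasureTheory.integral_add (hint (t q.1)) (hint (t q.2))]
    rfl
  have hsum : (∑ i : Fin n, ∑ j : Fin n,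
      c i * c j * (F p (t i) + F p (t j) - F p (t i - t j)))
      = ∫ ξ in Ioi (0:ℝ), ∑ q : Fin n × Fin n, g p t c q ξ := by
    rw [MeasureTheory.integral_finset_sum _ (fun q _ => hgint q),
      Fintype.sum_prod_type (f := fun q : Fin n × Fin n => ∫ ξ in Ioi (0:ℝ), g p t c q ξ)]
    exact Finset.sum_congr rfl fun i _ => Finset.sum_congr rfl fun j _ => (hgval (i, j)).symm
  rw [hsum]
  refine setIntegral_nonneg measurableSet_Ioi fun ξ hξ => ?_
  have hξ0 : (0:ℝ) < ξ := hξ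
  have hrp : (0:ℝ) ≤ ξ ^ (-p) := (Real.rpow_pos_of_pos hξ0 _).le
  have key : (∑ q : Fin n × Fin n, g p t c q ξ) =
      ((∑ i : Fin n, c i * (1 - Real.cos (t i * ξ))) ^ 2
        + (∑ i : Fin n, c i * Real.sin (t i * ξ)) ^ 2) * ξ ^ (-p) := by
    rw [Fintype.sum_prod_type, add_mul, pow_two, pow_two, Finset.sum_mul_sum,
      Finset.sum_mul_sum, Finset.sum_mul, Finset.sum_mul, ← Finset.sum_add_distrib]
    refine Finset.sum_congr rfl fun i _ => ?_
    rw [Finset.sum_mul, Finset.sum_mul, ← Finset.sum_add_distrib]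
    refine Finset.sum_congr rfl fun j _ => ?_
    unfold g
    simp only
    rw [sub_mul (t i) (t j) ξ, Real.cos_sub]
    ring
  rw [key]
  positivity

end FBMposDef

/-- For every Hurst parameter `H ∈ (0,1)`, the covariance kernel
`R_H(t,s) = (1/2)(s^(2H) + t^(2H) - |t-s|^(2H))` is positive semidefinite on `[0,∞)`:
for all points `t_1, …, t_n ∈ [0,∞)` and reals `c_1, …, c_n` one has
`∑ i ∑ j, c i * c j * R_H (t i) (t j) ≥ 0`. -/
theorem fBm_covariance_posSemidef
    (H : ℝ) (hH : H ∈ Set.Ioo (0 : ℝ) 1)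
    (R : ℝ → ℝ → ℝ)
    (hR : ∀ t s : ℝ, R t s = (1 / 2) * (s ^ (2 * H) + t ^ (2 * H) - |t - s| ^ (2 * H)))
    (n : ℕ) (t : Fin n → ℝ) (ht : ∀ i, 0 ≤ t i) (c : Fin n → ℝ) :
    0 ≤ ∑ i : Fin n, ∑ j : Fin n, c i * c j * R (t i) (t j) := by
  obtain ⟨hH0, hH1⟩ := hH
  set p : ℝ := 1 + 2 * H with hp
  have hp1 : 1 < p := by rw [hp]; linarith
  have hp3 : p < 3 := by rw [hp]; linarith
  have hK := FBMposDef.K_pos hp1 hp3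
  have hKne : FBMposDef.K p ≠ 0 := hK.ne'
  have hrep : ∀ x : ℝ, |x| ^ (2 * H) = FBMposDef.F p x / FBMposDef.K p := by
    intro x
    rw [FBMposDef.F_abs x hp1, show p - 1 = 2 * H by rw [hp]; ring]
    field_simp
  have hrep' : ∀ i : Fin n, t i ^ (2 * H) = FBMposDef.F p (t i) / FBMposDef.K p := by
    intro i
    rw [← abs_of_nonneg (ht i), hrep, abs_of_nonneg (ht i)]
  have key : (∑ i : Fin n, ∑ j : Fin n, c i * c j * R (t i) (t j))
      = (1 / (2 * FBMposDef.K p)) * ∑ i : Fin n, ∑ j : Fin n,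
        c i * c j * (FBMposDef.F p (t i) + FBMposDef.F p (t j)
          - FBMposDef.F p (t i - t j)) := by
    rw [Finset.mul_sum]
    refine Finset.sum_congr rfl fun i _ => ?_
    rw [Finset.mul_sum]
    refine Finset.sum_congr rfl fun j _ => ?_
    rw [hR, hrep' i, hrep' j, hrep (t i - t j),
      show (1:ℝ)/2 * (FBMposDef.F p (t j)/FBMposDef.K p + FBMposDef.F p (t i)/FBMposDef.K p
        - FBMposDef.F p (t i - t j)/FBMposDef.K p)
        = 1/(2*FBMposDef.K p) * (FBMposDef.F p (t i) + FBMposDef.F p (t j)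
          - FBMposDef.F p (t i - t j)) from by field_simp; ring]
    ring
  rw [key]
  exact mul_nonneg (by positivity) (FBMposDef.sum_F_nonneg hp1 hp3 t c)
end

section
/- For every Hurst parameter H ∈ (1/2, 1), T > 0 and every continuous function f : [0,T] → ℝ, the bilinear form value ⟨f,f⟩_H = H(2H−1) ∫_0^T ∫_0^T f(s) f(t) |t−s|^{2H−2} ds dt is nonnegative. Hence ⟨·,·⟩_H is a positive semidefinite bilinear form on continuous functions on [0,T]. -/
open MeasureTheory Set Real

-- measurability helper
lemma measurable_abs_rpow (c : ℝ) (hc : c ≠ 0) : Measurable (fun x : ℝ => |x| ^ c) := by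
  have : (fun x : ℝ => |x| ^ c) = fun x => if x = 0 then (0:ℝ) else Real.exp (Real.log |x| * c) := by
    funext x
    by_cases hx : x = 0
    · simp [hx, Real.zero_rpow hc]
    · rw [if_neg hx, Real.rpow_def_of_pos (abs_pos.mpr hx)]
  rw [this]
  exact Measurable.ite (measurableSet_singleton 0 : MeasurableSet {x : ℝ | x = 0}) measurable_const
    (Real.measurable_exp.comp ((Real.measurable_log.comp measurable_abs).mul_const c))

variable {a : ℝ}

lemma aux_cont (ha1 : (-1:ℝ) < a) {c : ℝ} (hc : 0 < c) :
    ContinuousOn (fun v : ℝ => (c + v) ^ a * v ^ a) (Ioi (0:ℝ)) := by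
  apply ContinuousOn.mul
  · exact (continuousOn_const.add continuousOn_id).rpow_const
      (fun x hx => Or.inl (by have : (0:ℝ) < x := hx; show c + x ≠ 0; positivity))
  · exact continuousOn_id.rpow_const (fun x hx => Or.inl (ne_of_gt hx))

lemma aux_integrable (ha1 : (-1:ℝ) < a) (ha2 : 2 * a < -1) {c : ℝ} (hc : 0 < c) :
    IntegrableOn (fun v : ℝ => (c + v) ^ a * v ^ a) (Ioi (0:ℝ)) := by
  have hsplit : Ioi (0:ℝ) = Ioc (0:ℝ) 1 ∪ Ioi (1:ℝ) := (Set.Ioc_union_Ioi_eq_Ioi zero_le_one).symm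
  rw [hsplit]
  have hmeas : ∀ S : Set ℝ, S ⊆ Ioi 0 → MeasurableSet S →
      AEStronglyMeasurable (fun v : ℝ => (c + v) ^ a * v ^ a) (volume.restrict S) := by
    intro S hS hSm
    exact ((aux_cont ha1 hc).mono hS).aestronglyMeasurable hSm
  apply IntegrableOn.union
  · -- dominate by c^a * v^a on (0,1]
    have hdom : IntegrableOn (fun v : ℝ => c ^ a * v ^ a) (Ioc (0:ℝ) 1) :=
      ((intervalIntegral.intervalIntegrable_rpow' ha1 (a := 0) (b := 1)).1.const_mul _)
    refine Integrable.mono' hdom (hmeas _ (fun x hx => hx.1) measurableSet_Ioc) ?_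
    filter_upwards [ae_restrict_mem measurableSet_Ioc] with v hv
    have hv0 : (0:ℝ) < v := hv.1
    rw [Real.norm_eq_abs, abs_of_nonneg (by positivity)]
    apply mul_le_mul_of_nonneg_right _ (Real.rpow_nonneg hv0.le a)
    exact Real.rpow_le_rpow_of_nonpos hc (by linarith) (by linarith)
  · -- dominate by v^(2a) on (1,∞)
    have hdom : IntegrableOn (fun v : ℝ => v ^ (2*a)) (Ioi (1:ℝ)) :=
      integrableOn_Ioi_rpow_of_lt ha2 one_pos
    refine Integrable.mono' hdom (hmeas (Ioi 1) (fun x hx => (lt_trans one_pos (show (1:ℝ) < x from hx) : (0:ℝ) < x)) measurableSet_Ioi) ?_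
    filter_upwards [ae_restrict_mem measurableSet_Ioi] with v hv
    have hv0 : (0:ℝ) < v := lt_trans one_pos hv
    rw [Real.norm_eq_abs, abs_of_nonneg (by positivity)]
    have h1 : (c + v) ^ a ≤ v ^ a :=
      Real.rpow_le_rpow_of_nonpos hv0 (by linarith) (by linarith)
    calc (c + v) ^ a * v ^ a ≤ v ^ a * v ^ a :=
          mul_le_mul_of_nonneg_right h1 (Real.rpow_nonneg hv0.le a)
      _ = v ^ (2*a) := by rw [← Real.rpow_add hv0]; ring_nf

noncomputable def Bconst (a : ℝ) : ℝ := ∫ w in Ioi (0:ℝ), (1 + w) ^ a * w ^ a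

lemma Bconst_pos (ha1 : (-1:ℝ) < a) (ha2 : 2 * a < -1) : 0 < Bconst a := by
  rw [Bconst, setIntegral_pos_iff_support_of_nonneg_ae]
  · have hsub : Ioi (0:ℝ) ⊆ (Function.support fun w : ℝ => (1 + w) ^ a * w ^ a) ∩ Ioi 0 := by
      intro w hw
      have hw0 : (0:ℝ) < w := hw
      refine ⟨?_, hw⟩
      simp only [Function.mem_support]
      positivity
    calc (0:ENNReal) < volume (Ioi (0:ℝ)) := by simp [Real.volume_Ioi]
      _ ≤ _ := measure_mono hsub
  · filter_upwards [ae_restrict_mem measurableSet_Ioi] with w hw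
    have hw0 : (0:ℝ) < w := hw
    positivity
  · simpa using aux_integrable ha1 ha2 one_pos

lemma aux_scaling (ha1 : (-1:ℝ) < a) {c : ℝ} (hc : 0 < c) :
    ∫ v in Ioi (0:ℝ), (c + v) ^ a * v ^ a = c ^ (2*a+1) * Bconst a := by
  have h := integral_comp_mul_left_Ioi (fun x => (c + x) ^ a * x ^ a) 0 hc
  rw [mul_zero] at h
  have heq : ∀ w ∈ Ioi (0:ℝ), (fun x => (c + x) ^ a * x ^ a) (c * w)
      = (c ^ a * c ^ a) * ((1 + w) ^ a * w ^ a) := by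
    intro w hw
    have hw0 : (0:ℝ) < w := hw
    simp only
    rw [show c + c * w = c * (1 + w) by ring, Real.mul_rpow hc.le (by linarith),
      Real.mul_rpow hc.le hw0.le]
    ring
  rw [setIntegral_congr_fun measurableSet_Ioi heq] at h
  rw [MeasureTheory.integral_const_mul] at h
  have : c ^ (2*a+1) = c * (c ^ a * c ^ a) := by
    rw [show (2*a+1 : ℝ) = 1 + (a + a) by ring, Real.rpow_add hc, Real.rpow_add hc, Real.rpow_one]
  rw [this, Bconst]
  rw [smul_eq_mul] at h
  field_simp at h ⊢
  linarith [h]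

noncomputable def phiK (a t u : ℝ) : ℝ := if u < t then |t - u| ^ a else 0

lemma phiK_nonneg (a t u : ℝ) : 0 ≤ phiK a t u := by
  rw [phiK]; split
  · positivity
  · exact le_rfl

lemma phiK_mul (a : ℝ) {s t : ℝ} (hst : s < t) (u : ℝ) :
    phiK a t u * phiK a s u
      = Set.indicator (Iio s) (fun u => |t - u| ^ a * |s - u| ^ a) u := by
  by_cases hu : u < s
  · rw [Set.indicator_of_mem (show u ∈ Iio s from hu), phiK, phiK, if_pos hu, if_pos (hu.trans hst)]
  · rw [Set.indicator_of_notMem (show u ∉ Iio s from hu), phiK, phiK, if_neg hu, mul_zero]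

lemma kernel_rep (ha1 : (-1:ℝ) < a) (ha2 : 2 * a < -1) {s t : ℝ} (hst : s < t) :
    Integrable (fun u => phiK a t u * phiK a s u) volume ∧
    ∫ u, phiK a t u * phiK a s u = (t - s) ^ (2*a+1) * Bconst a := by
  have hfun : (fun u => phiK a t u * phiK a s u)
      = Set.indicator (Iio s) (fun u => |t - u| ^ a * |s - u| ^ a) := by
    funext u; exact phiK_mul a hst u
  -- the substitution map
  set e : ℝ → ℝ := fun v => s + (-v) with he_def
  have hemb : MeasurableEmbedding e :=
    ((Homeomorph.neg ℝ).trans (Homeomorph.addLeft s)).isClosedEmbedding.measurableEmbedding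
  have hmp : MeasurePreserving e volume volume :=
    (measurePreserving_add_left volume s).comp (Measure.measurePreserving_neg volume)
  have hpre : e ⁻¹' (Iio s) = Ioi (0:ℝ) := by
    ext v; simp [he_def]
  have hcomp : ∀ v ∈ Ioi (0:ℝ),
      |t - e v| ^ a * |s - e v| ^ a = ((t - s) + v) ^ a * v ^ a := by
    intro v hv
    have hv0 : (0:ℝ) < v := hv
    have h1 : t - e v = (t - s) + v := by rw [he_def]; ring
    have h2 : s - e v = v := by rw [he_def]; ring
    rw [h1, h2, abs_of_pos (by linarith), abs_of_pos hv0]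
  have hint : IntegrableOn (fun u => |t - u| ^ a * |s - u| ^ a) (Iio s) := by
    rw [← hmp.integrableOn_comp_preimage hemb, hpre]
    exact (aux_integrable ha1 ha2 (by linarith : (0:ℝ) < t - s)).congr_fun
      (fun v hv => (hcomp v hv).symm) measurableSet_Ioi
  constructor
  · rw [hfun]
    exact (integrable_indicator_iff measurableSet_Iio).mpr hint
  · rw [hfun, integral_indicator measurableSet_Iio]
    rw [← hmp.setIntegral_preimage_emb hemb _ (Iio s), hpre]
    rw [setIntegral_congr_fun measurableSet_Ioi hcomp]
    exact aux_scaling ha1 (by linarith : (0:ℝ) < t - s)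

lemma kernel_rep' (ha1 : (-1:ℝ) < a) (ha2 : 2 * a < -1) {s t : ℝ} (hst : s ≠ t) :
    Integrable (fun u => phiK a t u * phiK a s u) volume ∧
    ∫ u, phiK a t u * phiK a s u = |t - s| ^ (2*a+1) * Bconst a := by
  rcases lt_or_gt_of_ne hst with h | h
  · have := kernel_rep ha1 ha2 h
    rwa [abs_of_pos (by linarith : (0:ℝ) < t - s)]
  · have := kernel_rep ha1 ha2 h
    have hcomm : (fun u => phiK a s u * phiK a t u) = (fun u => phiK a t u * phiK a s u) := by
      funext u; ring
    rw [hcomm] at this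
    rwa [abs_sub_comm, abs_of_pos (by linarith : (0:ℝ) < s - t)]

lemma measurable_phiK2 (ha : a ≠ 0) : Measurable (fun q : ℝ × ℝ => phiK a q.1 q.2) := by
  have : (fun q : ℝ × ℝ => phiK a q.1 q.2)
      = fun q : ℝ × ℝ => if q.2 < q.1 then |q.1 - q.2| ^ a else 0 := rfl
  rw [this]
  exact Measurable.ite (measurableSet_lt measurable_snd measurable_fst)
    ((measurable_abs_rpow a ha).comp (measurable_fst.sub measurable_snd)) measurable_const

-- integrability of x ↦ |x|^a on a bounded interval, for -1 < a
lemma abs_rpow_integrable (ha1 : (-1:ℝ) < a) (ha0 : a ≠ 0) {T : ℝ} (hT : 0 < T) :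
    IntegrableOn (fun x : ℝ => |x| ^ a) (Icc (-T) T) := by
  have hmeas := measurable_abs_rpow a ha0
  have hpos : IntegrableOn (fun x : ℝ => |x| ^ a) (Ioc 0 T) := by
    refine ((intervalIntegral.intervalIntegrable_rpow' ha1 (a := 0) (b := T)).1).congr_fun
      (fun x hx => ?_) measurableSet_Ioc
    rw [abs_of_pos hx.1]
  have hneg : IntegrableOn (fun x : ℝ => |x| ^ a) (Ico (-T) 0) := by
    have hpre : (fun x : ℝ => -x) ⁻¹' (Ioc 0 T) = Ico (-T) 0 := by
      ext x; simp only [mem_preimage, mem_Ioc, mem_Ico]; constructor <;> intro h <;>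
        constructor <;> linarith [h.1, h.2]
    have := ((Measure.measurePreserving_neg (volume : Measure ℝ)).integrableOn_comp_preimage
      (Homeomorph.neg ℝ).isClosedEmbedding.measurableEmbedding).mpr hpos
    rw [hpre] at this
    refine this.congr_fun (fun x _ => ?_) measurableSet_Ico
    simp [Function.comp, abs_neg]
  have hunion : IntegrableOn (fun x : ℝ => |x| ^ a) (Ico (-T) 0 ∪ Ioc 0 T) := hneg.union hpos
  refine hunion.mono_set_ae ?_
  have : (Icc (-T) T : Set ℝ) =ᵐ[volume] (Ico (-T) 0 ∪ Ioc 0 T : Set ℝ) := by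
    have h1 : (Icc (-T) T : Set ℝ) \ (Ico (-T) 0 ∪ Ioc 0 T) ⊆ {0} := by
      intro x hx
      simp only [mem_diff, mem_Icc, mem_union, mem_Ico, mem_Ioc, not_or, not_and, not_lt,
        not_le] at hx
      have h0 : x = 0 := by
        rcases lt_trichotomy x 0 with h | h | h
        · exact absurd (hx.2.1 hx.1.1) (not_le.mpr h)
        · exact h
        · linarith [hx.2.2 h, hx.1.2]
      simp [h0]
    have h2 : (Ico (-T) 0 ∪ Ioc 0 T : Set ℝ) ⊆ Icc (-T) T := by
      intro x hx
      rcases hx with h | h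
      · exact ⟨h.1, by linarith [h.2]⟩
      · exact ⟨by linarith [h.1], h.2⟩
    rw [MeasureTheory.ae_eq_set]
    constructor
    · exact measure_mono_null h1 (by simp)
    · rw [Set.diff_eq_empty.mpr h2]; simp
  exact this.le

lemma translate_integrable (ha1 : (-1:ℝ) < a) (ha0 : a ≠ 0) {T t : ℝ} (hT : 0 < T)
    (ht : t ∈ Icc (0:ℝ) T) :
    IntegrableOn (fun s : ℝ => |t - s| ^ a) (Ioc 0 T) ∧
    ∫ s in Ioc (0:ℝ) T, |t - s| ^ a ≤ ∫ x in Icc (-T) T, |x| ^ a := by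
  set e : ℝ → ℝ := fun v => t + (-v) with he_def
  have hemb : MeasurableEmbedding e :=
    ((Homeomorph.neg ℝ).trans (Homeomorph.addLeft t)).isClosedEmbedding.measurableEmbedding
  have hmp : MeasurePreserving e volume volume :=
    (measurePreserving_add_left volume t).comp (Measure.measurePreserving_neg volume)
  have hintC0 := abs_rpow_integrable ha1 ha0 hT
  have hbig : IntegrableOn (fun s : ℝ => |t - s| ^ a) (e ⁻¹' (Icc (-T) T)) := by
    have := (hmp.integrableOn_comp_preimage hemb).mpr hintC0
    refine this.congr_fun (fun x _ => ?_) (hemb.measurable measurableSet_Icc)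
    simp [Function.comp, he_def, sub_eq_add_neg]
  have hsub : Ioc (0:ℝ) T ⊆ e ⁻¹' (Icc (-T) T) := by
    intro s hs
    simp only [mem_preimage, he_def, mem_Icc]
    constructor <;> [linarith [hs.2, ht.1]; linarith [hs.1, ht.2]]
  refine ⟨hbig.mono_set hsub, ?_⟩
  have h1 : ∫ s in Ioc (0:ℝ) T, |t - s| ^ a ≤ ∫ s in e ⁻¹' (Icc (-T) T), |t - s| ^ a := by
    refine setIntegral_mono_set hbig ?_ (HasSubset.Subset.eventuallyLE hsub)
    filter_upwards with x; positivity
  refine h1.trans (le_of_eq ?_)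
  have := hmp.setIntegral_preimage_emb hemb (fun x : ℝ => |x| ^ a) (Icc (-T) T)
  rw [← this]
  refine setIntegral_congr_fun (hemb.measurable measurableSet_Icc) (fun x _ => ?_)
  simp [he_def, sub_eq_add_neg]

lemma kernel_prod_integrable (ha1 : (-1:ℝ) < a) (ha0 : a ≠ 0) {T : ℝ} (hT : 0 < T) :
    Integrable (fun p : ℝ × ℝ => |p.1 - p.2| ^ a)
      ((volume.restrict (Ioc 0 T)).prod (volume.restrict (Ioc 0 T))) := by
  set μ := volume.restrict (Ioc (0:ℝ) T) with hμ
  haveI : IsFiniteMeasure μ := ⟨by rw [hμ, Measure.restrict_apply_univ]; exact measure_Ioc_lt_top⟩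
  have hasm : AEStronglyMeasurable (fun p : ℝ × ℝ => |p.1 - p.2| ^ a) (μ.prod μ) :=
    ((measurable_abs_rpow a ha0).comp (measurable_fst.sub measurable_snd)).aestronglyMeasurable
  rw [integrable_prod_iff hasm]
  constructor
  · filter_upwards [ae_restrict_mem measurableSet_Ioc] with x hx
    exact (translate_integrable ha1 ha0 hT ⟨hx.1.le, hx.2⟩).1
  · have hasm2 : AEStronglyMeasurable (fun x : ℝ => ∫ y, ‖|x - y| ^ a‖ ∂μ) μ :=
      AEStronglyMeasurable.integral_prod_right' (hasm.norm)
    refine Integrable.mono' (integrable_const (∫ x in Icc (-T) T, |x| ^ a)) hasm2 ?_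
    filter_upwards [ae_restrict_mem measurableSet_Ioc] with x hx
    have h1 : (fun y => ‖|x - y| ^ a‖) = fun y => |x - y| ^ a := by
      funext y; rw [Real.norm_eq_abs, abs_of_nonneg (by positivity)]
    rw [Real.norm_eq_abs, h1, abs_of_nonneg (integral_nonneg (fun y => by positivity))]
    exact (translate_integrable ha1 ha0 hT ⟨hx.1.le, hx.2⟩).2

lemma diag_null {T : ℝ} :
    ((volume.restrict (Ioc (0:ℝ) T)).prod (volume.restrict (Ioc (0:ℝ) T)))
      {p : ℝ × ℝ | p.1 = p.2} = 0 := by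
  have hD : MeasurableSet {p : ℝ × ℝ | p.1 = p.2} :=
    measurableSet_eq_fun measurable_fst measurable_snd
  have h0 : (volume.prod volume) {p : ℝ × ℝ | p.1 = p.2} = 0 := by
    rw [Measure.measure_prod_null hD]
    refine Filter.Eventually.of_forall (fun x => ?_)
    have : (Prod.mk x ⁻¹' {p : ℝ × ℝ | p.1 = p.2}) = {x} := by
      ext y; simp [eq_comm]
    show volume (Prod.mk x ⁻¹' {p : ℝ × ℝ | p.1 = p.2}) = 0
    rw [this]; exact measure_singleton x
  rw [Measure.prod_restrict, Measure.restrict_apply hD]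
  exact measure_mono_null Set.inter_subset_left h0
/-- For `H ∈ (1/2, 1)`, `T > 0` and every continuous `f : [0,T] → ℝ`, the bilinear form value
`⟨f,f⟩_H = H(2H-1) ∫_0^T ∫_0^T f(s) f(t) |t-s|^(2H-2) ds dt` is nonnegative, so `⟨·,·⟩_H`
is a positive semidefinite bilinear form on continuous functions on `[0,T]`. -/
theorem fBm_inner_product_nonneg
    (H T : ℝ) (hH : H ∈ Set.Ioo (1 / 2 : ℝ) 1) (hT : 0 < T)
    (f : ℝ → ℝ) (hf : ContinuousOn f (Set.Icc 0 T)) :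
    0 ≤ H * (2 * H - 1) * ∫ t in (0:ℝ)..T, ∫ s in (0:ℝ)..T, f s * f t * |t - s| ^ (2 * H - 2) := by
  obtain ⟨hH1, hH2⟩ := hH
  set a : ℝ := H - 3/2 with ha_def
  have ha1 : (-1:ℝ) < a := by rw [ha_def]; linarith
  have ha2 : 2 * a < -1 := by rw [ha_def]; linarith
  have ha0 : a ≠ 0 := by rw [ha_def]; intro h; linarith [sub_eq_zero.mp h]
  have hexp : (2 * H - 2 : ℝ) = 2 * a + 1 := by rw [ha_def]; ring
  rw [hexp]
  -- clamp function
  set cl : ℝ → ℝ := fun x => max 0 (min x T) with hcl_def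
  have hcl_cont : Continuous cl := continuous_const.max (continuous_id.min continuous_const)
  have hcl_mem : ∀ x, cl x ∈ Icc (0:ℝ) T := fun x =>
    ⟨le_max_left _ _, max_le hT.le (min_le_right _ _)⟩
  set g : ℝ → ℝ := fun x => f (cl x) with hg_def
  have hg : Continuous g := hf.comp_continuous hcl_cont hcl_mem
  have hgf : ∀ x ∈ Icc (0:ℝ) T, g x = f x := by
    intro x hx
    rw [hg_def]
    simp only
    rw [hcl_def]
    simp only
    rw [min_eq_left hx.2, max_eq_right hx.1]
  obtain ⟨M, hM⟩ := isCompact_Icc.exists_bound_of_continuousOn hf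
  have hgM : ∀ x, |g x| ≤ M := fun x => hM _ (hcl_mem x)
  set μ : Measure ℝ := volume.restrict (Ioc 0 T) with hμ_def
  haveI : IsFiniteMeasure μ :=
    ⟨by rw [hμ_def, Measure.restrict_apply_univ]; exact measure_Ioc_lt_top⟩
  set B : ℝ := Bconst a with hB_def
  have hB : 0 < B := Bconst_pos ha1 ha2
  -- kernel integrability
  have hker := kernel_prod_integrable (a := 2*a+1) (by linarith) (by intro h; linarith) hT
  -- K' integrable
  set K' : ℝ × ℝ → ℝ := fun p => g p.2 * g p.1 * |p.1 - p.2| ^ (2*a+1) with hK'_def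
  have hK'meas : Measurable K' :=
    ((hg.measurable.comp measurable_snd).mul (hg.measurable.comp measurable_fst)).mul
      ((measurable_abs_rpow _ (by intro h; linarith)).comp (measurable_fst.sub measurable_snd))
  have hK'int : Integrable K' (μ.prod μ) := by
    refine Integrable.mono' (hker.const_mul (M * M)) hK'meas.aestronglyMeasurable ?_
    filter_upwards with p
    rw [Real.norm_eq_abs, hK'_def]
    simp only
    rw [abs_mul, abs_mul, abs_of_nonneg (by positivity : (0:ℝ) ≤ |p.1 - p.2| ^ (2*a+1))]
    have h2 : (0:ℝ) ≤ |p.1 - p.2| ^ (2*a+1) := by positivity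
    have hM0 : 0 ≤ M := le_trans (abs_nonneg _) (hgM 0)
    calc |g p.2| * |g p.1| * |p.1 - p.2| ^ (2*a+1)
        ≤ (M * M) * |p.1 - p.2| ^ (2*a+1) := by
          refine mul_le_mul_of_nonneg_right ?_ h2
          exact mul_le_mul (hgM p.2) (hgM p.1) (abs_nonneg _) hM0
      _ = M * M * |p.1 - p.2| ^ (2*a+1) := rfl
  -- step A : rewrite the double integral
  have hstepA : (∫ t in (0:ℝ)..T, ∫ s in (0:ℝ)..T, f s * f t * |t - s| ^ (2*a+1))
      = ∫ p, K' p ∂(μ.prod μ) := by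
    have h1 : (∫ t in (0:ℝ)..T, ∫ s in (0:ℝ)..T, f s * f t * |t - s| ^ (2*a+1))
        = ∫ t in (0:ℝ)..T, ∫ s in (0:ℝ)..T, g s * g t * |t - s| ^ (2*a+1) := by
      refine intervalIntegral.integral_congr (fun t ht => ?_)
      rw [uIcc_of_le hT.le] at ht
      refine intervalIntegral.integral_congr (fun s hs => ?_)
      rw [uIcc_of_le hT.le] at hs
      rw [hgf t ht, hgf s hs]
    rw [h1, intervalIntegral.integral_of_le hT.le]
    simp_rw [intervalIntegral.integral_of_le hT.le]
    rw [integral_prod _ hK'int]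
  rw [hstepA]
  -- the integrand family
  set Ψ : ℝ × ℝ → ℝ → ℝ :=
    fun p u => (g p.1 * phiK a p.1 u) * (g p.2 * phiK a p.2 u) with hΨ_def
  have hΨmeas : Measurable (Function.uncurry Ψ) := by
    have hphi : Measurable (fun q : ℝ × ℝ => phiK a q.1 q.2) := measurable_phiK2 ha0
    exact ((hg.measurable.comp (measurable_fst.comp measurable_fst)).mul
        (hphi.comp ((measurable_fst.comp measurable_fst).prodMk measurable_snd))).mul
      ((hg.measurable.comp (measurable_snd.comp measurable_fst)).mul
        (hphi.comp ((measurable_snd.comp measurable_fst).prodMk measurable_snd)))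
  have hdiag : ∀ᵐ p ∂(μ.prod μ), p.1 ≠ p.2 := by
    rw [ae_iff]
    convert diag_null (T := T) using 2
    ext p; simp
  -- pointwise kernel representation
  have hrep : ∀ p : ℝ × ℝ, p.1 ≠ p.2 →
      Integrable (fun u => Ψ p u) volume ∧
      (∫ u, Ψ p u) = (g p.1 * g p.2) * (|p.1 - p.2| ^ (2*a+1) * B) := by
    intro p hp
    obtain ⟨hint, hval⟩ := kernel_rep' ha1 ha2 (s := p.2) (t := p.1) (Ne.symm hp)
    have hfun : (fun u => Ψ p u)
        = fun u => (g p.1 * g p.2) * (phiK a p.1 u * phiK a p.2 u) := by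
      funext u; rw [hΨ_def]; ring
    constructor
    · rw [hfun]; exact hint.const_mul _
    · rw [hfun, MeasureTheory.integral_const_mul, hval]
  -- integrability of uncurried Ψ
  have hΨint : Integrable (Function.uncurry Ψ) ((μ.prod μ).prod volume) := by
    rw [integrable_prod_iff hΨmeas.aestronglyMeasurable]
    constructor
    · filter_upwards [hdiag] with p hp
      exact (hrep p hp).1
    · have hasm2 : AEStronglyMeasurable (fun p : ℝ × ℝ => ∫ u, ‖Ψ p u‖) (μ.prod μ) :=
        AEStronglyMeasurable.integral_prod_right' (hΨmeas.aestronglyMeasurable.norm)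
      refine Integrable.mono' (hker.const_mul (M * M * B)) hasm2 ?_
      filter_upwards [hdiag] with p hp
      have hnorm : (fun u => ‖Ψ p u‖)
          = fun u => (|g p.1| * |g p.2|) * (phiK a p.1 u * phiK a p.2 u) := by
        funext u
        rw [Real.norm_eq_abs, hΨ_def]
        simp only
        rw [abs_mul, abs_mul, abs_mul, abs_of_nonneg (phiK_nonneg a p.1 u),
          abs_of_nonneg (phiK_nonneg a p.2 u)]
        ring
      obtain ⟨hint, hval⟩ := kernel_rep' ha1 ha2 (s := p.2) (t := p.1) (Ne.symm hp)
      simp only [Function.uncurry_apply_pair]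
      rw [Real.norm_eq_abs, abs_of_nonneg (integral_nonneg (fun u => norm_nonneg _)), hnorm,
        MeasureTheory.integral_const_mul, hval]
      have h2 : (0:ℝ) ≤ |p.1 - p.2| ^ (2*a+1) := by positivity
      have hM0 : 0 ≤ M := le_trans (abs_nonneg _) (hgM 0)
      calc |g p.1| * |g p.2| * (|p.1 - p.2| ^ (2*a+1) * B)
          ≤ (M * M) * (|p.1 - p.2| ^ (2*a+1) * B) := by
            refine mul_le_mul_of_nonneg_right ?_ (by positivity)
            exact mul_le_mul (hgM p.1) (hgM p.2) (abs_nonneg _) hM0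
        _ = M * M * B * |p.1 - p.2| ^ (2*a+1) := by ring
  -- swap
  have hswap := MeasureTheory.integral_integral_swap hΨint
  -- right hand side nonneg
  have hRHS : 0 ≤ ∫ u, ∫ p, Ψ p u ∂(μ.prod μ) := by
    refine integral_nonneg (fun u => ?_)
    have : (∫ p, Ψ p u ∂(μ.prod μ))
        = (∫ t, g t * phiK a t u ∂μ) * (∫ t, g t * phiK a t u ∂μ) :=
      integral_prod_mul (f := fun t => g t * phiK a t u) (g := fun t => g t * phiK a t u)
    rw [this]
    exact mul_self_nonneg _
  -- left hand side
  have hLHS : (∫ p, (∫ u, Ψ p u) ∂(μ.prod μ)) = B * ∫ p, K' p ∂(μ.prod μ) := by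
    rw [← MeasureTheory.integral_const_mul]
    refine integral_congr_ae ?_
    filter_upwards [hdiag] with p hp
    rw [(hrep p hp).2, hK'_def]
    simp only
    ring
  rw [hswap] at hLHS
  have hI : 0 ≤ ∫ p, K' p ∂(μ.prod μ) := by
    have := hLHS ▸ hRHS
    nlinarith [hB]
  have hcoef : (0:ℝ) ≤ H * (2 * H - 1) := by nlinarith
  exact mul_nonneg hcoef hI
end

section
/- Let E be a real Banach space, T > 0, k a positive natural number, f : ℝ × E → E continuously differentiable with ‖f(t,x)‖ + ‖∂_t f(t,x)‖ ≤ φ(t)(1 + ‖x‖) and ‖∂_x f(t,x) v‖² ≤ φ(t)² (1 + ‖x‖² + ‖v‖²) for a continuous φ : [0,T] → ℝ, and let a ↦ w_a ∈ C([0,T], E) be continuously differentiable with w_0 = 0. Then for every x₀ ∈ E there exist an open neighborhood U of (0, x₀) in ℝ × E and a continuously differentiable map G : U → C([0,T], E) such that for every (a, x) ∈ U the function Y(t) := x + G(a,x)(t) satisfies the integral equation Y(t) = x + ∫_0^t a^k f(a^k s, Y(s)) ds + w_a(t) for all t ∈ [0,T]. In particular, the solution of the rescaled equation exists for all sufficiently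 small a and depends continuously differentiably on the initial condition x. -/
open Set Filter Topology MeasureTheory intervalIntegral
set_option linter.unusedSectionVars false

section Aux

lemma my_unif {X Y : Type*} [PseudoMetricSpace X] [PseudoMetricSpace Y]
    {g : X → Y} (hg : Continuous g) {K : Set X} (hK : IsCompact K) {ε : ℝ} (hε : 0 < ε) :
    ∃ δ > 0, ∀ x ∈ K, ∀ y, dist y x < δ → dist (g y) (g x) < ε := by
  have h := hK.uniformContinuousAt_of_continuousAt g (fun a _ => hg.continuousAt)
    (Metric.dist_mem_uniformity hε)
  rw [Metric.mem_uniformity_dist] at h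
  obtain ⟨δ, hδ, h⟩ := h
  refine ⟨δ, hδ, fun x hx y hxy => ?_⟩
  have hxy' : dist x y < δ := by rwa [dist_comm]
  have := h hxy' hx
  rwa [dist_comm]

variable {E : Type*} [NormedAddCommGroup E] [NormedSpace ℝ E] [CompleteSpace E]

/-- constant inclusion as a CLM -/
noncomputable def constLC (T : ℝ) : E →L[ℝ] C(Icc (0:ℝ) T, E) :=
  LinearMap.mkContinuous
    { toFun := fun x => ContinuousMap.const _ x
      map_add' := fun x y => rfl
      map_smul' := fun c x => rfl }
    1 (fun x => by
      rw [one_mul]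
      exact (ContinuousMap.norm_le _ (norm_nonneg x)).mpr fun t => le_rfl)

@[simp] lemma constLC_apply (T : ℝ) (x : E) (t : Icc (0:ℝ) T) : constLC T x t = x := rfl

/-- integration operator as a CLM -/
noncomputable def intOpC (T : ℝ) (h : 0 ≤ T) : C(Icc (0:ℝ) T, E) →L[ℝ] C(Icc (0:ℝ) T, E) :=
  LinearMap.mkContinuous
    { toFun := fun u => ⟨fun t => ∫ s in (0:ℝ)..(t:ℝ), u (projIcc 0 T h s),
        ((intervalIntegral.continuous_primitive
          (fun a b => ((u.continuous.comp continuous_projIcc).intervalIntegrable a b)) 0).comp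
          continuous_subtype_val)⟩
      map_add' := fun u v => ContinuousMap.ext fun t => by
        show ∫ s in (0:ℝ)..(t:ℝ), (u + v) (projIcc 0 T h s) = _
        simp only [ContinuousMap.add_apply]
        exact intervalIntegral.integral_add
          ((u.continuous.comp continuous_projIcc).intervalIntegrable _ _)
          ((v.continuous.comp continuous_projIcc).intervalIntegrable _ _)
      map_smul' := fun c u => ContinuousMap.ext fun t => by
        show ∫ s in (0:ℝ)..(t:ℝ), (c • u) (projIcc 0 T h s) = _
        simp only [ContinuousMap.smul_apply]
        rw [intervalIntegral.integral_smul]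
        rfl }
    T (fun u => by
      have hnn : (0:ℝ) ≤ T * ‖u‖ := mul_nonneg h (norm_nonneg u)
      refine (ContinuousMap.norm_le _ hnn).mpr fun t => ?_
      have hb := intervalIntegral.norm_integral_le_of_norm_le_const
        (C := ‖u‖) (f := fun s => u (projIcc 0 T h s)) (a := 0) (b := (t:ℝ))
        (fun s _ => u.norm_coe_le_norm _)
      refine hb.trans ?_
      have h1 : |(t:ℝ) - 0| ≤ T := by
        rw [sub_zero, abs_of_nonneg t.2.1]; exact t.2.2
      calc ‖u‖ * |(t:ℝ) - 0| ≤ ‖u‖ * T := by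
            exact mul_le_mul_of_nonneg_left h1 (norm_nonneg u)
        _ = T * ‖u‖ := mul_comm _ _)

lemma intOpC_apply (T : ℝ) (h : 0 ≤ T) (u : C(Icc (0:ℝ) T, E)) (t : Icc (0:ℝ) T) :
    intOpC T h u t = ∫ s in (0:ℝ)..(t:ℝ), u (projIcc 0 T h s) := rfl

end Aux



section Nem

variable {E : Type*} [NormedAddCommGroup E] [NormedSpace ℝ E] [CompleteSpace E]
variable (T : ℝ) (f : ℝ × E → E)

/-- Nemytskii (superposition) operator -/
def nemC (hfc : Continuous f) :
    C(Icc (0:ℝ) T, ℝ) × C(Icc (0:ℝ) T, E) → C(Icc (0:ℝ) T, E) :=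
  fun z => ⟨fun t => f (z.1 t, z.2 t), hfc.comp (z.1.continuous.prodMk z.2.continuous)⟩

lemma nemC_apply (hfc : Continuous f) (z) (t : Icc (0:ℝ) T) :
    nemC T f hfc z t = f (z.1 t, z.2 t) := rfl

variable (hf : ContDiff ℝ 1 f)

/-- candidate derivative of the Nemytskii operator -/
noncomputable def nemDC (z : C(Icc (0:ℝ) T, ℝ) × C(Icc (0:ℝ) T, E)) :
    (C(Icc (0:ℝ) T, ℝ) × C(Icc (0:ℝ) T, E)) →L[ℝ] C(Icc (0:ℝ) T, E) := by
  have hDf : Continuous (fderiv ℝ f) := hf.continuous_fderiv one_ne_zero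
  have hcont : ∀ h : C(Icc (0:ℝ) T, ℝ) × C(Icc (0:ℝ) T, E),
      Continuous fun t : Icc (0:ℝ) T => fderiv ℝ f (z.1 t, z.2 t) (h.1 t, h.2 t) := fun h =>
    (hDf.comp (z.1.continuous.prodMk z.2.continuous)).clm_apply
      (h.1.continuous.prodMk h.2.continuous)
  exact LinearMap.mkContinuous
    { toFun := fun h => ⟨fun t => fderiv ℝ f (z.1 t, z.2 t) (h.1 t, h.2 t), hcont h⟩
      map_add' := fun h h' => ContinuousMap.ext fun t => by
        simp [ContinuousMap.add_apply, Prod.fst_add, Prod.snd_add, Prod.mk_add_mk,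
          ← ContinuousLinearMap.map_add]
      map_smul' := fun c h => ContinuousMap.ext fun t => by
        simp [ContinuousMap.smul_apply, Prod.smul_fst, Prod.smul_snd, Prod.smul_mk,
          ← ContinuousLinearMap.map_smul] }
    ‖(⟨fun t => ‖fderiv ℝ f (z.1 t, z.2 t)‖,
        (hDf.comp (z.1.continuous.prodMk z.2.continuous)).norm⟩ : C(Icc (0:ℝ) T, ℝ))‖
    (fun h => by
      set B : C(Icc (0:ℝ) T, ℝ) := ⟨fun t => ‖fderiv ℝ f (z.1 t, z.2 t)‖,
        (hDf.comp (z.1.continuous.prodMk z.2.continuous)).norm⟩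
      have hnn : (0:ℝ) ≤ ‖B‖ * ‖h‖ := mul_nonneg (norm_nonneg _) (norm_nonneg _)
      refine (ContinuousMap.norm_le _ hnn).mpr fun t => ?_
      have h1 : ‖fderiv ℝ f (z.1 t, z.2 t) (h.1 t, h.2 t)‖
          ≤ ‖fderiv ℝ f (z.1 t, z.2 t)‖ * ‖((h.1 t, h.2 t) : ℝ × E)‖ :=
        ContinuousLinearMap.le_opNorm _ _
      refine h1.trans (mul_le_mul ?_ ?_ (norm_nonneg _) (norm_nonneg _))
      · exact (le_abs_self _).trans (B.norm_coe_le_norm t)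
      · rw [Prod.norm_def]
        exact max_le ((h.1.norm_coe_le_norm t).trans (norm_fst_le h))
          ((h.2.norm_coe_le_norm t).trans (norm_snd_le h)))

lemma nemDC_apply (z h) (t : Icc (0:ℝ) T) :
    nemDC T f hf z h t = fderiv ℝ f (z.1 t, z.2 t) (h.1 t, h.2 t) := rfl

/-- key uniform-continuity estimate for `fderiv f` near the image of a compact curve -/
lemma nem_key (hf : ContDiff ℝ 1 f) (z : C(Icc (0:ℝ) T, ℝ) × C(Icc (0:ℝ) T, E)) {ε : ℝ} (hε : 0 < ε) :
    ∃ δ > 0, ∀ (t : Icc (0:ℝ) T) (y : ℝ × E), dist y (z.1 t, z.2 t) < δ →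
      ‖fderiv ℝ f y - fderiv ℝ f (z.1 t, z.2 t)‖ < ε := by
  obtain ⟨δ, hδ, h⟩ := my_unif (hf.continuous_fderiv one_ne_zero)
    (isCompact_range (z.1.continuous.prodMk z.2.continuous)) hε
  refine ⟨δ, hδ, fun t y hy => ?_⟩
  have := h (z.1 t, z.2 t) (mem_range_self t) y hy
  rwa [dist_eq_norm] at this

lemma nemC_hasFDerivAt (z : C(Icc (0:ℝ) T, ℝ) × C(Icc (0:ℝ) T, E)) :
    HasFDerivAt (nemC T f hf.continuous) (nemDC T f hf z) z := by
  rw [hasFDerivAt_iff_isLittleO_nhds_zero]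
  rw [Asymptotics.isLittleO_iff]
  intro c hc
  obtain ⟨δ, hδ, hkey⟩ := nem_key T f hf z hc
  filter_upwards [Metric.ball_mem_nhds (0 : C(Icc (0:ℝ) T, ℝ) × C(Icc (0:ℝ) T, E)) hδ]
    with h hh
  rw [mem_ball_zero_iff] at hh
  have hcnn : (0:ℝ) ≤ c * ‖h‖ := mul_nonneg hc.le (norm_nonneg _)
  refine (ContinuousMap.norm_le _ hcnn).mpr fun t => ?_
  set w : ℝ × E := (z.1 t, z.2 t) with hw
  set d : ℝ × E := (h.1 t, h.2 t) with hd
  have hdh : ‖d‖ ≤ ‖h‖ := by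
    rw [Prod.norm_def]
    exact max_le ((h.1.norm_coe_le_norm t).trans (norm_fst_le h))
      ((h.2.norm_coe_le_norm t).trans (norm_snd_le h))
  have hdδ : ‖d‖ < δ := lt_of_le_of_lt hdh hh
  -- MVT estimate on the ball around w
  have hmvt : ‖f (w + d) - f w - fderiv ℝ f w d‖ ≤ c * ‖d‖ := by
    have hconv : Convex ℝ (Metric.ball w δ) := convex_ball w δ
    have hderiv : ∀ y ∈ Metric.ball w δ,
        HasFDerivWithinAt (fun y => f y - fderiv ℝ f w y)
          (fderiv ℝ f y - fderiv ℝ f w) (Metric.ball w δ) y := fun y _ =>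
      (((hf.differentiable one_ne_zero) y).hasFDerivAt.sub
        ((fderiv ℝ f w).hasFDerivAt)).hasFDerivWithinAt
    have hbound : ∀ y ∈ Metric.ball w δ, ‖fderiv ℝ f y - fderiv ℝ f w‖ ≤ c := fun y hy =>
      (hkey t y (by rwa [Metric.mem_ball] at hy)).le
    have hmem1 : w ∈ Metric.ball w δ := Metric.mem_ball_self hδ
    have hmem2 : w + d ∈ Metric.ball w δ := by
      rw [Metric.mem_ball, dist_eq_norm, add_sub_cancel_left]; exact hdδ
    have h2 := Convex.norm_image_sub_le_of_norm_hasFDerivWithin_le hderiv hbound hconv hmem1 hmem2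
    rw [add_sub_cancel_left] at h2
    have h3 : (f (w + d) - fderiv ℝ f w (w + d)) - (f w - fderiv ℝ f w w)
        = f (w + d) - f w - fderiv ℝ f w d := by
      rw [map_add]; abel
    rwa [h3] at h2
  calc ‖(nemC T f hf.continuous (z + h) - nemC T f hf.continuous z - nemDC T f hf z h) t‖
      = ‖f (w + d) - f w - fderiv ℝ f w d‖ := by
        simp only [ContinuousMap.sub_apply, nemC_apply, nemDC_apply, Prod.fst_add,
          Prod.snd_add, ContinuousMap.add_apply, hw, hd, Prod.mk_add_mk]
    _ ≤ c * ‖d‖ := hmvt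
    _ ≤ c * ‖h‖ := mul_le_mul_of_nonneg_left hdh hc.le

lemma nemDC_continuous : Continuous (nemDC T f hf) := by
  have H : ∀ z₀ (ε : ℝ), 0 < ε → ∃ δ > 0, ∀ z,
      dist z z₀ < δ → dist (nemDC T f hf z) (nemDC T f hf z₀) < ε := by
    intro z₀ ε hε
    obtain ⟨δ, hδ, hkey⟩ := nem_key T f hf z₀ (half_pos hε)
    refine ⟨δ, hδ, fun z hz => ?_⟩
    have hle : ‖nemDC T f hf z - nemDC T f hf z₀‖ ≤ ε / 2 := by
      refine ContinuousLinearMap.opNorm_le_bound _ (half_pos hε).le fun h => ?_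
      have hnn : (0:ℝ) ≤ ε / 2 * ‖h‖ := mul_nonneg (half_pos hε).le (norm_nonneg _)
      refine (ContinuousMap.norm_le _ hnn).mpr fun t => ?_
      have hdist : dist ((z.1 t, z.2 t) : ℝ × E) (z₀.1 t, z₀.2 t) < δ := by
        rw [Prod.dist_eq]
        refine lt_of_le_of_lt (max_le_max (z.1.dist_apply_le_dist t) (z.2.dist_apply_le_dist t)) ?_
        rw [← Prod.dist_eq]; exact hz
      have h1 := (hkey t _ hdist).le
      calc ‖((nemDC T f hf z - nemDC T f hf z₀) h) t‖
          = ‖(fderiv ℝ f (z.1 t, z.2 t) - fderiv ℝ f (z₀.1 t, z₀.2 t)) (h.1 t, h.2 t)‖ := by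
            simp only [ContinuousLinearMap.sub_apply, ContinuousMap.sub_apply, nemDC_apply,
              ContinuousLinearMap.coe_sub', Pi.sub_apply]
        _ ≤ ‖fderiv ℝ f (z.1 t, z.2 t) - fderiv ℝ f (z₀.1 t, z₀.2 t)‖
              * ‖((h.1 t, h.2 t) : ℝ × E)‖ := ContinuousLinearMap.le_opNorm _ _
        _ ≤ ε / 2 * ‖h‖ := by
            refine mul_le_mul h1 ?_ (norm_nonneg _) (half_pos hε).le
            rw [Prod.norm_def]
            exact max_le ((h.1.norm_coe_le_norm t).trans (norm_fst_le h))
              ((h.2.norm_coe_le_norm t).trans (norm_snd_le h))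
    exact (dist_eq_norm (nemDC T f hf z) (nemDC T f hf z₀)).trans_lt
      (lt_of_le_of_lt hle (half_lt_self hε))
  exact Metric.continuous_iff.mpr H

lemma nemC_contDiff : ContDiff ℝ 1 (nemC T f hf.continuous) := by
  rw [contDiff_one_iff_fderiv]
  have hD : ∀ z, HasFDerivAt (nemC T f hf.continuous) (nemDC T f hf z) z :=
    nemC_hasFDerivAt T f hf
  refine ⟨fun z => (hD z).differentiableAt, ?_⟩
  have heq : fderiv ℝ (nemC T f hf.continuous) = nemDC T f hf :=
    funext fun z => (hD z).fderiv
  exact heq ▸ nemDC_continuous T f hf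
end Nem

section Main

variable {E : Type*} [NormedAddCommGroup E] [NormedSpace ℝ E] [CompleteSpace E]

/-- identity coordinate as a continuous map -/
def idCC (T : ℝ) : C(Icc (0:ℝ) T, ℝ) := ⟨fun t => (t : ℝ), continuous_subtype_val⟩

/-- the fixed-point operator -/
noncomputable def KK (T : ℝ) (hT : 0 ≤ T) (k : ℕ) (f : ℝ × E → E) (hfc : Continuous f)
    (w : ℝ → C(Icc (0:ℝ) T, E)) : (ℝ × E) × C(Icc (0:ℝ) T, E) → C(Icc (0:ℝ) T, E) :=
  fun z => intOpC T hT (z.1.1 ^ k •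
    nemC T f hfc (z.1.1 ^ k • idCC T, constLC T z.1.2 + z.2)) + w z.1.1

lemma KK_contDiff (T : ℝ) (hT : 0 ≤ T) (k : ℕ) (f : ℝ × E → E) (hf : ContDiff ℝ 1 f)
    (w : ℝ → C(Icc (0:ℝ) T, E)) (hw : ContDiff ℝ 1 w) :
    ContDiff ℝ 1 (KK T hT k f hf.continuous w) := by
  have ha : ContDiff ℝ 1 (fun z : (ℝ × E) × C(Icc (0:ℝ) T, E) => z.1.1) :=
    contDiff_fst.fst
  have hpow : ContDiff ℝ 1 (fun z : (ℝ × E) × C(Icc (0:ℝ) T, E) => z.1.1 ^ k) := ha.pow k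
  have h1 : ContDiff ℝ 1 (fun z : (ℝ × E) × C(Icc (0:ℝ) T, E) => z.1.1 ^ k • idCC T) :=
    hpow.smul contDiff_const
  have h2a : ContDiff ℝ 1 (fun z : (ℝ × E) × C(Icc (0:ℝ) T, E) => constLC T z.1.2) :=
    ContDiff.comp (ContinuousLinearMap.contDiff (constLC T (E := E))) contDiff_fst.snd
  have h2 : ContDiff ℝ 1 (fun z : (ℝ × E) × C(Icc (0:ℝ) T, E) => constLC T z.1.2 + z.2) :=
    h2a.add contDiff_snd
  have hγ := h1.prodMk h2
  have hnem := (nemC_contDiff T f hf).comp hγ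
  have hNmap := hpow.smul hnem
  have hint := ContDiff.comp (ContinuousLinearMap.contDiff (intOpC T hT (E := E))) hNmap
  exact hint.add (hw.comp ha)

lemma KK_zero (T : ℝ) (hT : 0 ≤ T) (k : ℕ) (hk : 0 < k) (f : ℝ × E → E) (hfc : Continuous f)
    (w : ℝ → C(Icc (0:ℝ) T, E)) (hw0 : w 0 = 0) (x₀ : E) (X : C(Icc (0:ℝ) T, E)) :
    KK T hT k f hfc w ((0, x₀), X) = 0 := by
  show intOpC T hT (((0:ℝ)) ^ k • _) + w 0 = 0
  rw [zero_pow hk.ne', zero_smul, map_zero, hw0, add_zero]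

lemma KK_apply (T : ℝ) (hT : 0 ≤ T) (k : ℕ) (f : ℝ × E → E) (hfc : Continuous f)
    (w : ℝ → C(Icc (0:ℝ) T, E)) (p : ℝ × E) (X : C(Icc (0:ℝ) T, E)) (t : Icc (0:ℝ) T) :
    KK T hT k f hfc w (p, X) t
      = (∫ s in (0:ℝ)..(t:ℝ), p.1 ^ k •
          f (p.1 ^ k * ((projIcc 0 T hT s : Icc (0:ℝ) T) : ℝ), p.2 + X (projIcc 0 T hT s)))
        + w p.1 t := by
  show intOpC T hT _ t + w p.1 t = _
  rw [intOpC_apply]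
  congr 1

end Main

/-- The implicit-function-theorem step: under the paper's growth hypotheses on a `C¹` map
`f : ℝ × E → E` and with a `C¹` forcing curve `a ↦ w a ∈ C([0,T],E)` with `w 0 = 0`, for every
`x₀ ∈ E` there are an open neighborhood `U` of `(0, x₀)` in `ℝ × E` and a `C¹` map
`G : U → C([0,T],E)` such that for each `(a,x) ∈ U` the function `Y(t) = x + G(a,x)(t)`
satisfies `Y(t) = x + ∫_0^t a^k f(a^k s, Y(s)) ds + w_a(t)` on `[0,T]`. -/
theorem rescaled_equation_local_solution_via_IFT
    (E : Type*) [NormedAddCommGroup E] [NormedSpace ℝ E] [CompleteSpace E]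
    (T : ℝ) (hT : 0 < T) (k : ℕ) (hk : 0 < k)
    (f : ℝ × E → E) (hf : ContDiff ℝ 1 f)
    (φ : ℝ → ℝ) (hφ : ContinuousOn φ (Set.Icc 0 T))
    (hgrowth : ∀ t ∈ Set.Icc (0:ℝ) T, ∀ x : E,
      ‖f (t, x)‖ + ‖fderiv ℝ f (t, x) (1, 0)‖ ≤ φ t * (1 + ‖x‖))
    (hgrowth' : ∀ t ∈ Set.Icc (0:ℝ) T, ∀ x v : E,
      ‖fderiv ℝ f (t, x) (0, v)‖ ^ 2 ≤ (φ t) ^ 2 * (1 + ‖x‖ ^ 2 + ‖v‖ ^ 2))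
    (w : ℝ → C(Set.Icc (0:ℝ) T, E)) (hw : ContDiff ℝ 1 w) (hw0 : w 0 = 0) :
    ∀ x₀ : E, ∃ U : Set (ℝ × E), IsOpen U ∧ (0, x₀) ∈ U ∧
      ∃ G : ℝ × E → C(Set.Icc (0:ℝ) T, E), ContDiffOn ℝ 1 G U ∧
        ∀ p ∈ U, ∀ t : Set.Icc (0:ℝ) T,
          p.2 + G p t
            = p.2 + (∫ s in (0:ℝ)..(t:ℝ),
                p.1 ^ k • f (p.1 ^ k * s, p.2 + G p (Set.projIcc 0 T hT.le s)))
              + w p.1 t := by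
  intro x₀
  set K : (ℝ × E) × C(Icc (0:ℝ) T, E) → C(Icc (0:ℝ) T, E) :=
    KK T hT.le k f hf.continuous w with hKdef
  have hKc : ContDiff ℝ 1 K := KK_contDiff T hT.le k f hf w hw
  set z₀ : (ℝ × E) × C(Icc (0:ℝ) T, E) := (((0:ℝ), x₀), 0) with hz₀def
  have hK0 : ∀ X : C(Icc (0:ℝ) T, E), K ((0, x₀), X) = 0 :=
    fun X => KK_zero T hT.le k hk f hf.continuous w hw0 x₀ X
  set Φ : (ℝ × E) × C(Icc (0:ℝ) T, E) → (ℝ × E) × C(Icc (0:ℝ) T, E) :=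
    fun z => (z.1, z.2 - K z) with hΦdef
  have hΦc : ContDiff ℝ 1 Φ := contDiff_fst.prodMk (contDiff_snd.sub hKc)
  have hKd : HasFDerivAt K (fderiv ℝ K z₀) z₀ := (hKc.differentiable one_ne_zero z₀).hasFDerivAt
  set L : ((ℝ × E) × C(Icc (0:ℝ) T, E)) →L[ℝ] C(Icc (0:ℝ) T, E) := fderiv ℝ K z₀ with hLdef
  -- the partial derivative in the X-direction vanishes
  have hL0 : ∀ V : C(Icc (0:ℝ) T, E), L (0, V) = 0 := by
    have hJd : HasFDerivAt (fun V : C(Icc (0:ℝ) T, E) => ((((0:ℝ), x₀), V) :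
        (ℝ × E) × C(Icc (0:ℝ) T, E)))
        (ContinuousLinearMap.inr ℝ (ℝ × E) C(Icc (0:ℝ) T, E)) 0 := by
      have heq : (fun V : C(Icc (0:ℝ) T, E) => ((((0:ℝ), x₀), V) :
          (ℝ × E) × C(Icc (0:ℝ) T, E)))
          = fun V => z₀ + ContinuousLinearMap.inr ℝ (ℝ × E) C(Icc (0:ℝ) T, E) V := by
        funext V
        refine Prod.ext ?_ ?_ <;> simp [hz₀def]
      rw [heq]
      exact (ContinuousLinearMap.hasFDerivAt _).const_add z₀
    have hcomp : HasFDerivAt (fun V : C(Icc (0:ℝ) T, E) => K (((0:ℝ), x₀), V))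
        (L.comp (ContinuousLinearMap.inr ℝ (ℝ × E) C(Icc (0:ℝ) T, E))) 0 :=
      hKd.comp 0 hJd
    have hconst : HasFDerivAt (fun V : C(Icc (0:ℝ) T, E) => K (((0:ℝ), x₀), V))
        (0 : C(Icc (0:ℝ) T, E) →L[ℝ] C(Icc (0:ℝ) T, E)) 0 := by
      have heq2 : (fun V : C(Icc (0:ℝ) T, E) => K (((0:ℝ), x₀), V)) = fun _ => 0 :=
        funext fun V => hK0 V
      rw [heq2]
      exact hasFDerivAt_const 0 0
    intro V
    have h0 := hcomp.unique hconst
    calc L (0, V) = (L.comp (ContinuousLinearMap.inr ℝ (ℝ × E) C(Icc (0:ℝ) T, E))) V := rfl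
      _ = (0 : C(Icc (0:ℝ) T, E) →L[ℝ] C(Icc (0:ℝ) T, E)) V := by rw [h0]
      _ = 0 := rfl
  have hLsplit : ∀ z : (ℝ × E) × C(Icc (0:ℝ) T, E), L z = L (z.1, 0) := by
    intro z
    have hdecomp : z = (z.1, (0 : C(Icc (0:ℝ) T, E))) + ((0 : ℝ × E), z.2) := by
      refine Prod.ext ?_ ?_ <;> simp
    conv_lhs => rw [hdecomp]
    rw [map_add, hL0, add_zero]
  -- the derivative of Φ at z₀ as a continuous linear equivalence
  let eL : ((ℝ × E) × C(Icc (0:ℝ) T, E)) ≃ₗ[ℝ] ((ℝ × E) × C(Icc (0:ℝ) T, E)) :=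
    { toFun := fun z => (z.1, z.2 - L z)
      map_add' := fun z z' => by
        refine Prod.ext rfl ?_
        show (z + z').2 - L (z + z') = z.2 - L z + (z'.2 - L z')
        rw [map_add, Prod.snd_add]
        abel
      map_smul' := fun c z => by
        refine Prod.ext rfl ?_
        show (c • z).2 - L (c • z) = c • (z.2 - L z)
        rw [_root_.map_smul, Prod.smul_snd, smul_sub]
      invFun := fun z => (z.1, z.2 + L (z.1, 0))
      left_inv := fun z => by
        refine Prod.ext rfl ?_
        show z.2 - L z + L ((z.1, z.2 - L z).1, 0) = z.2
        rw [hLsplit z]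
        simp
      right_inv := fun z => by
        refine Prod.ext rfl ?_
        show z.2 + L (z.1, 0) - L ((z.1, z.2 + L (z.1, 0))) = z.2
        rw [hLsplit (z.1, z.2 + L (z.1, 0))]
        simp }
  let e : ((ℝ × E) × C(Icc (0:ℝ) T, E)) ≃L[ℝ] ((ℝ × E) × C(Icc (0:ℝ) T, E)) :=
    { eL with
      continuous_toFun := continuous_fst.prodMk (continuous_snd.sub L.continuous)
      continuous_invFun := continuous_fst.prodMk (continuous_snd.add
        (L.continuous.comp (continuous_fst.prodMk continuous_const))) }
  have hcoe : (e : ((ℝ × E) × C(Icc (0:ℝ) T, E)) →L[ℝ] ((ℝ × E) × C(Icc (0:ℝ) T, E)))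
      = (ContinuousLinearMap.fst ℝ (ℝ × E) C(Icc (0:ℝ) T, E)).prod
        ((ContinuousLinearMap.snd ℝ (ℝ × E) C(Icc (0:ℝ) T, E)) - L) :=
    ContinuousLinearMap.ext fun z => rfl
  have hΦd : HasFDerivAt Φ
      (e : ((ℝ × E) × C(Icc (0:ℝ) T, E)) →L[ℝ] ((ℝ × E) × C(Icc (0:ℝ) T, E))) z₀ := by
    rw [hcoe]
    exact (hasFDerivAt_fst).prodMk ((hasFDerivAt_snd).sub hKd)
  have hΦat : ContDiffAt ℝ 1 Φ z₀ := hΦc.contDiffAt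
  have hΦz₀ : Φ z₀ = z₀ := by
    show (z₀.1, z₀.2 - K z₀) = z₀
    have : K z₀ = 0 := hK0 0
    rw [this]
    refine Prod.ext rfl ?_
    simp [hz₀def]
  -- the local inverse
  set inv : (ℝ × E) × C(Icc (0:ℝ) T, E) → (ℝ × E) × C(Icc (0:ℝ) T, E) :=
    hΦat.localInverse hΦd one_ne_zero with hinvdef
  have hinvC : ContDiffAt ℝ 1 inv z₀ := by
    have := hΦat.to_localInverse hΦd one_ne_zero
    rwa [hΦz₀] at this
  have hright : ∀ᶠ y in 𝓝 z₀, Φ (inv y) = y := by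
    have := (hΦat.hasStrictFDerivAt' hΦd one_ne_zero).eventually_right_inverse
    rwa [hΦz₀] at this
  set G : ℝ × E → C(Icc (0:ℝ) T, E) := fun p => (inv (p, 0)).2 with hGdef
  have hGC : ContDiffAt ℝ 1 G ((0:ℝ), x₀) := by
    have hj : ContDiffAt ℝ 1 (fun p : ℝ × E =>
        ((p, (0 : C(Icc (0:ℝ) T, E))) : (ℝ × E) × C(Icc (0:ℝ) T, E))) ((0:ℝ), x₀) :=
      (contDiff_id.prodMk contDiff_const).contDiffAt
    exact contDiffAt_snd.comp ((0:ℝ), x₀) (hinvC.comp ((0:ℝ), x₀) hj)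
  have heq : ∀ᶠ p in 𝓝 (((0:ℝ), x₀) : ℝ × E), G p = K (p, G p) := by
    have hcont : Filter.Tendsto (fun p : ℝ × E =>
        ((p, (0 : C(Icc (0:ℝ) T, E))) : (ℝ × E) × C(Icc (0:ℝ) T, E)))
        (𝓝 ((0:ℝ), x₀)) (𝓝 z₀) :=
      (continuous_id.prodMk continuous_const).continuousAt
    filter_upwards [hcont.eventually hright] with p hp
    have h1 : (inv (p, 0)).1 = p := congrArg Prod.fst hp
    have h2 : (inv (p, 0)).2 - K (inv (p, 0)) = 0 := congrArg Prod.snd hp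
    have h3 : (inv (p, 0)).2 = K (inv (p, 0)) := sub_eq_zero.mp h2
    calc G p = K (inv (p, 0)) := h3
      _ = K ((inv (p, 0)).1, (inv (p, 0)).2) := rfl
      _ = K (p, G p) := by rw [h1]
  obtain ⟨u₁, hu₁n, hGu₁⟩ := hGC.contDiffOn le_rfl (by simp)
  obtain ⟨u₂, hu₂n, hu₂⟩ := heq.exists_mem
  refine ⟨interior (u₁ ∩ u₂), isOpen_interior,
    mem_interior_iff_mem_nhds.mpr (Filter.inter_mem hu₁n hu₂n), G,
    hGu₁.mono (fun p hp => (interior_subset hp).1), ?_⟩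
  intro p hp t
  have hpK : G p = K (p, G p) := hu₂ p (interior_subset hp).2
  have hval : G p t = (∫ s in (0:ℝ)..(t:ℝ),
      p.1 ^ k • f (p.1 ^ k * s, p.2 + G p (Set.projIcc 0 T hT.le s))) + w p.1 t := by
    conv_lhs => rw [hpK]
    rw [hKdef, KK_apply]
    congr 1
    refine intervalIntegral.integral_congr fun s hs => ?_
    rw [Set.uIcc_of_le t.2.1] at hs
    have hsT : s ∈ Set.Icc (0:ℝ) T := ⟨hs.1, hs.2.trans t.2.2⟩
    have hproj : ((Set.projIcc 0 T hT.le s : Set.Icc (0:ℝ) T) : ℝ) = s := by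
      rw [Set.projIcc_of_mem hT.le hsT]
    rw [hproj]
  rw [hval, ← add_assoc]
end

section
/- Let E be a real Banach space and f : ℝ × E → E continuously differentiable such that there is a continuous function φ : [0,∞) → ℝ with ‖f(t,x)‖ + ‖∂_t f(t,x)‖ ≤ φ(t)(1 + ‖x‖) and ‖∂_x f(t,x) v‖² ≤ φ(t)² (1 + ‖x‖² + ‖v‖²) for all t ≥ 0 and x, v ∈ E. Let v : [0,∞) → E be continuous with v(0) = 0. Then for every x₀ ∈ E there exist τ > 0, an open neighborhood V of x₀ in E, and a map X : V → C([0,τ], E), continuously differentiable in the initial condition, such that for every x ∈ V the function X(x) satisfies X(x)(t) = x + ∫_0^t f(s, X(x)(s)) ds + v(t) for all t ∈ [0,τ]. In particular a solution of the forced integral equation exists and depends smoothly on its initial condition. -/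
set_option linter.unusedSectionVars false
open Set Filter Topology ContinuousLinearMap intervalIntegral

/-- Uniform continuity near a compact set: points of `K` admit a uniform modulus even for
comparison points outside `K`. -/
lemma exists_delta_of_continuous_of_compact {X Y : Type*} [MetricSpace X] [MetricSpace Y]
    {g : X → Y} (hg : Continuous g) {K : Set X} (hK : IsCompact K) {ε : ℝ} (hε : 0 < ε) :
    ∃ δ > 0, ∀ x ∈ K, ∀ y, dist y x < δ → dist (g y) (g x) < ε := by
  have h : ∀ x : X, ∃ δ > 0, ∀ y, dist y x < δ → dist (g y) (g x) < ε / 2 := by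
    intro x
    rcases Metric.continuousAt_iff.1 hg.continuousAt (ε / 2) (by positivity) with ⟨δ, hδ, h⟩
    exact ⟨δ, hδ, fun y hy => h hy⟩
  choose δ hδ hδ' using h
  rcases hK.elim_nhds_subcover (fun x => Metric.ball x (δ x / 2))
    (fun x _ => Metric.ball_mem_nhds x (by linarith [hδ x])) with ⟨t, -, htK⟩
  by_cases hne : t.Nonempty
  · refine ⟨t.inf' hne fun x => δ x / 2, ?_, ?_⟩
    · exact (Finset.lt_inf'_iff hne).2 fun x _ => by linarith [hδ x]
    · intro x hx y hy
      rcases Set.mem_iUnion₂.1 (htK hx) with ⟨z, hz, hxz⟩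
      have h1 : dist x z < δ z / 2 := Metric.mem_ball.1 hxz
      have hle : t.inf' hne (fun x => δ x / 2) ≤ δ z / 2 := Finset.inf'_le _ hz
      have h2 : dist y z < δ z := by
        calc dist y z ≤ dist y x + dist x z := dist_triangle _ _ _
          _ < δ z / 2 + δ z / 2 := by have := lt_of_lt_of_le hy hle; linarith
          _ = δ z := by ring
      have h3 : dist x z < δ z := by linarith [hδ z]
      calc dist (g y) (g x) ≤ dist (g y) (g z) + dist (g z) (g x) := dist_triangle _ _ _
        _ < ε / 2 + ε / 2 := add_lt_add (hδ' z y h2) (by rw [dist_comm]; exact hδ' z x h3)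
        _ = ε := by ring
  · refine ⟨1, one_pos, fun x hx => ?_⟩
    exfalso
    rcases Set.mem_iUnion₂.1 (htK hx) with ⟨z, hz, -⟩
    exact hne ⟨z, hz⟩

section Ops

variable {E : Type*} [NormedAddCommGroup E] [NormedSpace ℝ E] [CompleteSpace E] {τ : ℝ}

/-- The primitive (integration) operator on `C([0,τ], E)`. -/
noncomputable def intCM (hτ : 0 ≤ τ) (u : C(Set.Icc (0:ℝ) τ, E)) : C(Set.Icc (0:ℝ) τ, E) :=
  ⟨fun t => ∫ s in (0:ℝ)..(t:ℝ), u (Set.projIcc 0 τ hτ s),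
    (intervalIntegral.continuous_primitive
      (fun a b => (u.continuous.comp (continuous_projIcc)).intervalIntegrable a b) 0).comp
      continuous_subtype_val⟩

@[simp] lemma intCM_apply (hτ : 0 ≤ τ) (u : C(Set.Icc (0:ℝ) τ, E)) (t : Set.Icc (0:ℝ) τ) :
    intCM hτ u t = ∫ s in (0:ℝ)..(t:ℝ), u (Set.projIcc 0 τ hτ s) := rfl

/-- The integration operator as a continuous linear map. -/
noncomputable def intL (hτ : 0 ≤ τ) : C(Set.Icc (0:ℝ) τ, E) →L[ℝ] C(Set.Icc (0:ℝ) τ, E) :=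
  LinearMap.mkContinuous
    { toFun := intCM hτ
      map_add' := fun u w => by
        ext t
        simp only [intCM_apply, ContinuousMap.add_apply]
        have hiu : IntervalIntegrable (fun s => u (Set.projIcc 0 τ hτ s))
            MeasureTheory.volume 0 (t : ℝ) :=
          (u.continuous.comp continuous_projIcc).intervalIntegrable _ _
        have hiw : IntervalIntegrable (fun s => w (Set.projIcc 0 τ hτ s))
            MeasureTheory.volume 0 (t : ℝ) :=
          (w.continuous.comp continuous_projIcc).intervalIntegrable _ _
        exact intervalIntegral.integral_add hiu hiw
      map_smul' := fun c u => by
        ext t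
        simp only [intCM_apply, ContinuousMap.smul_apply, RingHom.id_apply]
        rw [← intervalIntegral.integral_smul] }
    τ
    (fun u => by
      apply (ContinuousMap.norm_le _ (by positivity)).2
      intro t
      calc ‖∫ s in (0:ℝ)..(t:ℝ), u (Set.projIcc 0 τ hτ s)‖
          ≤ ‖u‖ * |(t:ℝ) - 0| := intervalIntegral.norm_integral_le_of_norm_le_const
            (fun s _ => u.norm_coe_le_norm _)
        _ ≤ τ * ‖u‖ := by
            rw [sub_zero, abs_of_nonneg t.2.1]
            have := t.2.2
            nlinarith [norm_nonneg u, t.2.1])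

@[simp] lemma intL_apply (hτ : 0 ≤ τ) (u : C(Set.Icc (0:ℝ) τ, E)) (t : Set.Icc (0:ℝ) τ) :
    intL hτ u t = ∫ s in (0:ℝ)..(t:ℝ), u (Set.projIcc 0 τ hτ s) := rfl

lemma intL_norm_le (hτ : 0 ≤ τ) : ‖(intL (E := E) hτ)‖ ≤ τ :=
  LinearMap.mkContinuous_norm_le _ hτ _

/-- The constant-function embedding as a continuous linear map. -/
noncomputable def constL : E →L[ℝ] C(Set.Icc (0:ℝ) τ, E) :=
  LinearMap.mkContinuous
    { toFun := fun x => ContinuousMap.const _ x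
      map_add' := fun a b => rfl
      map_smul' := fun c a => rfl }
    1
    (fun x => by
      apply (ContinuousMap.norm_le _ (by positivity)).2
      intro t
      exact (le_refl ‖x‖).trans_eq (by ring))

@[simp] lemma constL_apply (x : E) (t : Set.Icc (0:ℝ) τ) : (constL (τ := τ) x) t = x := rfl

end Ops

section Nem

variable {E : Type*} [NormedAddCommGroup E] [NormedSpace ℝ E] [CompleteSpace E] {τ : ℝ}

/-- The composition (Nemytskii) operator `u ↦ (t ↦ f (t, u t))` on `C([0,τ], E)`. -/
def compCM (f : ℝ × E → E) (hfc : Continuous f) (u : C(Set.Icc (0:ℝ) τ, E)) :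
    C(Set.Icc (0:ℝ) τ, E) :=
  ⟨fun t => f ((t : ℝ), u t), hfc.comp (continuous_subtype_val.prodMk u.continuous)⟩

@[simp] lemma compCM_apply (f : ℝ × E → E) (hfc : Continuous f)
    (u : C(Set.Icc (0:ℝ) τ, E)) (t : Set.Icc (0:ℝ) τ) :
    compCM f hfc u t = f ((t : ℝ), u t) := rfl

/-- The pointwise derivative data of the Nemytskii operator, as a continuous map. -/
noncomputable def derCM (f : ℝ × E → E) (hf : ContDiff ℝ 1 f) (u : C(Set.Icc (0:ℝ) τ, E)) :
    C(Set.Icc (0:ℝ) τ, (ℝ × E) →L[ℝ] E) :=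
  ⟨fun t => fderiv ℝ f ((t : ℝ), u t),
    (hf.continuous_fderiv one_ne_zero).comp (continuous_subtype_val.prodMk u.continuous)⟩

/-- The candidate Fréchet derivative of the Nemytskii operator at `u`. -/
noncomputable def compDer (f : ℝ × E → E) (hf : ContDiff ℝ 1 f) (u : C(Set.Icc (0:ℝ) τ, E)) :
    C(Set.Icc (0:ℝ) τ, E) →L[ℝ] C(Set.Icc (0:ℝ) τ, E) :=
  LinearMap.mkContinuous
    { toFun := fun h =>
        ⟨fun t => derCM f hf u t ((0 : ℝ), h t),
          (derCM f hf u).continuous.clm_apply (continuous_const.prodMk h.continuous)⟩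
      map_add' := fun h1 h2 => by
        ext t
        have : ((0:ℝ), h1 t + h2 t) = ((0:ℝ), h1 t) + ((0:ℝ), h2 t) := by
          simp [Prod.ext_iff]
        simp only [ContinuousMap.coe_mk, ContinuousMap.add_apply, this, map_add]
      map_smul' := fun c h => by
        ext t
        have : ((0:ℝ), c • h t) = c • ((0:ℝ), h t) := by simp [Prod.ext_iff]
        simp only [ContinuousMap.coe_mk, ContinuousMap.smul_apply, RingHom.id_apply, this,
          map_smul] }
    ‖derCM f hf u‖
    (fun h => by
      apply (ContinuousMap.norm_le _ (by positivity)).2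
      intro t
      have h1 : ‖derCM f hf u t ((0:ℝ), h t)‖ ≤ ‖derCM f hf u t‖ * ‖((0:ℝ), h t)‖ :=
        (derCM f hf u t).le_opNorm _
      have h2 : ‖((0:ℝ), h t)‖ = ‖h t‖ := by
        simp [Prod.norm_def, norm_zero, max_eq_right (norm_nonneg _)]
      have h3 : ‖derCM f hf u t‖ ≤ ‖derCM f hf u‖ := (derCM f hf u).norm_coe_le_norm t
      have h4 : ‖h t‖ ≤ ‖h‖ := h.norm_coe_le_norm t
      calc ‖derCM f hf u t ((0:ℝ), h t)‖ ≤ ‖derCM f hf u t‖ * ‖h t‖ := by rw [h2] at h1; exact h1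
        _ ≤ ‖derCM f hf u‖ * ‖h‖ :=
          mul_le_mul h3 h4 (norm_nonneg _) (norm_nonneg (derCM f hf u)))

@[simp] lemma compDer_apply (f : ℝ × E → E) (hf : ContDiff ℝ 1 f)
    (u h : C(Set.Icc (0:ℝ) τ, E)) (t : Set.Icc (0:ℝ) τ) :
    compDer f hf u h t = fderiv ℝ f ((t : ℝ), u t) ((0:ℝ), h t) := rfl

lemma norm_pair_zero (x : E) : ‖((0:ℝ), x)‖ = ‖x‖ := by
  simp [Prod.norm_def, norm_zero, max_eq_right (norm_nonneg _)]

/-- Partial derivative in the second variable, as a full-derivative composition. -/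
lemma hasFDerivAt_partial (f : ℝ × E → E) (hf : ContDiff ℝ 1 f) (t : ℝ) (w : E) :
    HasFDerivAt (fun w' : E => f (t, w'))
      ((fderiv ℝ f (t, w)).comp (ContinuousLinearMap.inr ℝ ℝ E)) w :=
  ((hf.differentiable one_ne_zero) (t, w)).hasFDerivAt.comp w (hasFDerivAt_prodMk_right t w)

lemma comp_inr_norm_le (A : (ℝ × E) →L[ℝ] E) :
    ‖A.comp (ContinuousLinearMap.inr ℝ ℝ E)‖ ≤ ‖A‖ := by
  refine ContinuousLinearMap.opNorm_le_bound _ (norm_nonneg _) fun k => ?_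
  have : A.comp (ContinuousLinearMap.inr ℝ ℝ E) k = A ((0:ℝ), k) := rfl
  rw [this]
  calc ‖A ((0:ℝ), k)‖ ≤ ‖A‖ * ‖((0:ℝ), k)‖ := A.le_opNorm _
    _ = ‖A‖ * ‖k‖ := by rw [norm_pair_zero]

lemma hasFDerivAt_compCM (f : ℝ × E → E) (hf : ContDiff ℝ 1 f) (u : C(Set.Icc (0:ℝ) τ, E)) :
    HasFDerivAt (compCM f hf.continuous) (compDer f hf u) u := by
  rw [hasFDerivAt_iff_isLittleO_nhds_zero, Asymptotics.isLittleO_iff]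
  intro c hc
  obtain ⟨δ, hδ0, hδ⟩ := exists_delta_of_continuous_of_compact (hf.continuous_fderiv one_ne_zero)
    (isCompact_range (continuous_subtype_val.prodMk u.continuous) :
      IsCompact (Set.range fun t : Set.Icc (0:ℝ) τ => ((t : ℝ), u t))) hc
  rw [Metric.eventually_nhds_iff]
  refine ⟨δ, hδ0, fun {h} hh => ?_⟩
  have hh' : ‖h‖ < δ := by simpa [dist_zero_right] using hh
  apply (ContinuousMap.norm_le _ (by positivity)).2
  intro t
  have hpt : ‖f ((t:ℝ), u t + h t) - f ((t:ℝ), u t) - fderiv ℝ f ((t:ℝ), u t) ((0:ℝ), h t)‖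
      ≤ c * ‖h t‖ := by
    have hmv := Convex.norm_image_sub_le_of_norm_hasFDerivWithin_le'
      (f := fun w : E => f ((t:ℝ), w))
      (f' := fun w : E => (fderiv ℝ f ((t:ℝ), w)).comp (ContinuousLinearMap.inr ℝ ℝ E))
      (φ := (fderiv ℝ f ((t:ℝ), u t)).comp (ContinuousLinearMap.inr ℝ ℝ E))
      (s := Metric.closedBall (u t) ‖h‖) (C := c)
      (fun w _ => (hasFDerivAt_partial f hf _ w).hasFDerivWithinAt)
      (fun w hw => by
        have hd : dist ((t:ℝ), w) ((t:ℝ), u t) < δ := by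
          rw [Prod.dist_eq]
          simp only [dist_self]
          have : dist w (u t) ≤ ‖h‖ := Metric.mem_closedBall.1 hw
          have : dist w (u t) < δ := lt_of_le_of_lt this hh'
          simpa [max_lt_iff, hδ0] using this
        have hnd := hδ ((t:ℝ), u t) ⟨t, rfl⟩ ((t:ℝ), w) hd
        rw [dist_eq_norm] at hnd
        calc ‖(fderiv ℝ f ((t:ℝ), w)).comp (ContinuousLinearMap.inr ℝ ℝ E)
              - (fderiv ℝ f ((t:ℝ), u t)).comp (ContinuousLinearMap.inr ℝ ℝ E)‖
            = ‖(fderiv ℝ f ((t:ℝ), w) - fderiv ℝ f ((t:ℝ), u t)).comp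
                (ContinuousLinearMap.inr ℝ ℝ E)‖ := by rw [ContinuousLinearMap.sub_comp]
          _ ≤ ‖fderiv ℝ f ((t:ℝ), w) - fderiv ℝ f ((t:ℝ), u t)‖ := comp_inr_norm_le _
          _ ≤ c := hnd.le)
      (convex_closedBall _ _)
      (Metric.mem_closedBall_self (norm_nonneg _))
      (by
        have : dist (u t + h t) (u t) = ‖h t‖ := by
          rw [dist_eq_norm]; simp
        rw [Metric.mem_closedBall, this]
        exact h.norm_coe_le_norm t)
    have heq : (fderiv ℝ f ((t:ℝ), u t)).comp (ContinuousLinearMap.inr ℝ ℝ E)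
        (u t + h t - u t) = fderiv ℝ f ((t:ℝ), u t) ((0:ℝ), h t) := by
      simp
    rw [heq] at hmv
    simpa using hmv
  have hexp : (compCM f hf.continuous (u + h) - compCM f hf.continuous u - compDer f hf u h) t
      = f ((t:ℝ), u t + h t) - f ((t:ℝ), u t) - fderiv ℝ f ((t:ℝ), u t) ((0:ℝ), h t) := by
    simp
  rw [hexp]
  calc ‖f ((t:ℝ), u t + h t) - f ((t:ℝ), u t) - fderiv ℝ f ((t:ℝ), u t) ((0:ℝ), h t)‖
      ≤ c * ‖h t‖ := hpt
    _ ≤ c * ‖h‖ := mul_le_mul_of_nonneg_left (h.norm_coe_le_norm t) hc.le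

lemma contDiff_compCM (f : ℝ × E → E) (hf : ContDiff ℝ 1 f) :
    ContDiff ℝ 1 (compCM (τ := τ) f hf.continuous) := by
  rw [contDiff_one_iff_fderiv]
  refine ⟨fun u => (hasFDerivAt_compCM f hf u).differentiableAt, ?_⟩
  have heq : fderiv ℝ (compCM (τ := τ) f hf.continuous) = fun u => compDer f hf u :=
    funext fun u => (hasFDerivAt_compCM f hf u).fderiv
  rw [heq]
  rw [Metric.continuous_iff]
  intro u ε hε
  obtain ⟨δ, hδ0, hδ⟩ := exists_delta_of_continuous_of_compact (hf.continuous_fderiv one_ne_zero)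
    (isCompact_range (continuous_subtype_val.prodMk u.continuous) :
      IsCompact (Set.range fun t : Set.Icc (0:ℝ) τ => ((t : ℝ), u t))) (half_pos hε)
  refine ⟨δ, hδ0, fun u' hu' => ?_⟩
  rw [dist_eq_norm]
  have hbound : ‖compDer f hf u' - compDer f hf u‖ ≤ ε / 2 := by
    refine ContinuousLinearMap.opNorm_le_bound _ (half_pos hε).le fun h => ?_
    apply (ContinuousMap.norm_le _ (by positivity)).2
    intro t
    have hd : dist ((t:ℝ), u' t) ((t:ℝ), u t) < δ := by
      rw [Prod.dist_eq]
      simp only [dist_self]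
      have h1 : dist (u' t) (u t) ≤ dist u' u := by
        rw [dist_eq_norm, dist_eq_norm]
        exact (u' - u).norm_coe_le_norm t
      have : dist (u' t) (u t) < δ := lt_of_le_of_lt h1 hu'
      simpa [max_lt_iff, hδ0] using this
    have hnd := hδ ((t:ℝ), u t) ⟨t, rfl⟩ ((t:ℝ), u' t) hd
    rw [dist_eq_norm] at hnd
    have hexp : ((compDer f hf u' - compDer f hf u) h) t
        = (fderiv ℝ f ((t:ℝ), u' t) - fderiv ℝ f ((t:ℝ), u t)) ((0:ℝ), h t) := by
      simp
    rw [hexp]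
    calc ‖(fderiv ℝ f ((t:ℝ), u' t) - fderiv ℝ f ((t:ℝ), u t)) ((0:ℝ), h t)‖
        ≤ ‖fderiv ℝ f ((t:ℝ), u' t) - fderiv ℝ f ((t:ℝ), u t)‖ * ‖((0:ℝ), h t)‖ :=
          ContinuousLinearMap.le_opNorm _ _
      _ ≤ (ε / 2) * ‖h‖ := by
          rw [norm_pair_zero]
          exact mul_le_mul hnd.le (h.norm_coe_le_norm t) (norm_nonneg _) (half_pos hε).le
  linarith
end Nem


set_option maxHeartbeats 1000000 in
/-- Deterministic pathwise form of the paper's main theorem: if `f : ℝ × E → E` is `C¹` with the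
growth bounds `‖f(t,x)‖ + ‖∂_t f(t,x)‖ ≤ φ(t)(1+‖x‖)` and
`‖∂_x f(t,x) v‖² ≤ φ(t)²(1+‖x‖²+‖v‖²)` on `[0,∞)`, and `v : [0,∞) → E` is continuous with
`v 0 = 0`, then for every `x₀ ∈ E` there are `τ > 0`, an open neighborhood `V ∋ x₀` and a map
`X : V → C([0,τ],E)`, continuously differentiable in the initial condition, with
`X(x)(t) = x + ∫_0^t f(s, X(x)(s)) ds + v(t)` for all `x ∈ V`, `t ∈ [0,τ]`. -/
theorem forced_equation_local_solution_smooth_dependence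
    (E : Type*) [NormedAddCommGroup E] [NormedSpace ℝ E] [CompleteSpace E]
    (f : ℝ × E → E) (hf : ContDiff ℝ 1 f)
    (φ : ℝ → ℝ) (hφ : ContinuousOn φ (Set.Ici 0))
    (hgrowth : ∀ t : ℝ, 0 ≤ t → ∀ x : E,
      ‖f (t, x)‖ + ‖fderiv ℝ f (t, x) (1, 0)‖ ≤ φ t * (1 + ‖x‖))
    (hgrowth' : ∀ t : ℝ, 0 ≤ t → ∀ x v : E,
      ‖fderiv ℝ f (t, x) (0, v)‖ ^ 2 ≤ (φ t) ^ 2 * (1 + ‖x‖ ^ 2 + ‖v‖ ^ 2))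
    (v : ℝ → E) (hv : ContinuousOn v (Set.Ici 0)) (hv0 : v 0 = 0) :
    ∀ x₀ : E, ∃ τ : ℝ, ∃ hτ : 0 < τ, ∃ V : Set E, IsOpen V ∧ x₀ ∈ V ∧
      ∃ X : E → C(Set.Icc (0:ℝ) τ, E), ContDiffOn ℝ 1 X V ∧
        ∀ x ∈ V, ∀ t : Set.Icc (0:ℝ) τ,
          X x t = x + (∫ s in (0:ℝ)..(t:ℝ),
              f (s, X x (Set.projIcc 0 τ hτ.le s))) + v (t:ℝ) := by
  intro x₀
  -- nonnegativity of φ on [0,∞)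
  have hφ0 : ∀ t : ℝ, 0 ≤ t → 0 ≤ φ t := by
    intro t ht
    have h := hgrowth t ht 0
    rw [norm_zero] at h
    nlinarith [norm_nonneg (f (t, (0:E))), norm_nonneg (fderiv ℝ f (t, (0:E)) (1, 0))]
  -- the key operator-norm bound on the partial derivative in the state variable
  have hkey : ∀ t : ℝ, 0 ≤ t → ∀ (x w : E), ‖fderiv ℝ f (t, x) ((0:ℝ), w)‖ ≤ φ t * ‖w‖ := by
    intro t ht x w
    have hφt := hφ0 t ht
    have hsq : ∀ c : ℝ, 0 < c →
        ‖fderiv ℝ f (t, x) ((0:ℝ), w)‖ ^ 2 * c ^ 2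
          ≤ φ t ^ 2 * (1 + ‖x‖ ^ 2) + φ t ^ 2 * ‖w‖ ^ 2 * c ^ 2 := by
      intro c hc
      have h := hgrowth' t ht x (c • w)
      have h2 : fderiv ℝ f (t, x) ((0:ℝ), c • w) = c • fderiv ℝ f (t, x) ((0:ℝ), w) := by
        rw [show ((0:ℝ), c • w) = c • ((0:ℝ), w) by simp [Prod.ext_iff], map_smul]
      rw [h2, norm_smul, norm_smul] at h
      rw [Real.norm_eq_abs, mul_pow, mul_pow, sq_abs] at h
      nlinarith [h]
    have hle : ‖fderiv ℝ f (t, x) ((0:ℝ), w)‖ ^ 2 ≤ (φ t * ‖w‖) ^ 2 := by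
      refine le_of_forall_pos_le_add fun ε hε => ?_
      set K := φ t ^ 2 * (1 + ‖x‖ ^ 2) with hK
      have hK0 : 0 ≤ K := by positivity
      set c := Real.sqrt (K / ε) + 1 with hc
      have hcpos : 0 < c := by positivity
      have hc2 : K / ε ≤ c ^ 2 := by
        nlinarith [Real.sq_sqrt (div_nonneg hK0 hε.le), Real.sqrt_nonneg (K / ε)]
      have hKε : K ≤ ε * c ^ 2 := by
        rw [div_le_iff₀ hε] at hc2; linarith
      have h := hsq c hcpos
      nlinarith [h, hKε, mul_pos hcpos hcpos, sq_nonneg c]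
    calc ‖fderiv ℝ f (t, x) ((0:ℝ), w)‖
        = Real.sqrt (‖fderiv ℝ f (t, x) ((0:ℝ), w)‖ ^ 2) :=
          (Real.sqrt_sq (norm_nonneg _)).symm
      _ ≤ Real.sqrt ((φ t * ‖w‖) ^ 2) := Real.sqrt_le_sqrt hle
      _ = φ t * ‖w‖ := Real.sqrt_sq (by positivity)
  -- constants
  set M₀ := sSup (φ '' Set.Icc (0:ℝ) 1) with hM₀def
  have hM₀ : ∀ t ∈ Set.Icc (0:ℝ) 1, φ t ≤ M₀ := fun t ht =>
    le_csSup ((isCompact_Icc.image_of_continuousOn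
      (hφ.mono Set.Icc_subset_Ici_self)).bddAbove) (Set.mem_image_of_mem φ ht)
  have hM₀0 : 0 ≤ M₀ := le_trans (hφ0 0 le_rfl) (hM₀ 0 (by norm_num))
  set M := M₀ + 1 with hMdef
  have hMpos : 0 < M := by linarith
  set τ := 1 / (2 * M) with hτdef
  have hτ : 0 < τ := by positivity
  have hτ1 : τ ≤ 1 := by
    rw [hτdef, div_le_one (by linarith)]; linarith
  have hτM : τ * M = 1 / 2 := by
    rw [hτdef]; field_simp
  have hφM : ∀ t : Set.Icc (0:ℝ) τ, φ (t:ℝ) ≤ M := fun t =>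
    le_trans (hM₀ (t:ℝ) ⟨t.2.1, le_trans t.2.2 hτ1⟩) (by linarith)
  -- the Banach space of curves
  haveI : Nonempty C(Set.Icc (0:ℝ) τ, E) := ⟨0⟩
  set N : C(Set.Icc (0:ℝ) τ, E) → C(Set.Icc (0:ℝ) τ, E) := compCM f hf.continuous with hNdef
  set vres : C(Set.Icc (0:ℝ) τ, E) :=
    ⟨fun t => v (t:ℝ), hv.comp_continuous continuous_subtype_val (fun t => t.2.1)⟩ with hvresdef
  -- uniform bound on the derivative of the Nemytskii operator
  have hDer_bound : ∀ u : C(Set.Icc (0:ℝ) τ, E), ‖compDer f hf u‖ ≤ M := by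
    intro u
    refine ContinuousLinearMap.opNorm_le_bound _ hMpos.le fun h => ?_
    apply (ContinuousMap.norm_le _ (by positivity)).2
    intro t
    rw [compDer_apply]
    calc ‖fderiv ℝ f ((t:ℝ), u t) ((0:ℝ), h t)‖ ≤ φ (t:ℝ) * ‖h t‖ := hkey _ t.2.1 _ _
      _ ≤ M * ‖h‖ := mul_le_mul (hφM t) (h.norm_coe_le_norm t) (norm_nonneg _) hMpos.le
  -- Lipschitz estimate for the Nemytskii operator
  have hNlip : ∀ u u' : C(Set.Icc (0:ℝ) τ, E), ‖N u - N u'‖ ≤ M * ‖u - u'‖ := by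
    intro u u'
    apply (ContinuousMap.norm_le _ (by positivity)).2
    intro t
    have hexp : (N u - N u') t = f ((t:ℝ), u t) - f ((t:ℝ), u' t) := by
      simp [hNdef]
    rw [hexp]
    have hmv := Convex.norm_image_sub_le_of_norm_hasFDerivWithin_le
      (f := fun w : E => f ((t:ℝ), w))
      (f' := fun w : E => (fderiv ℝ f ((t:ℝ), w)).comp (ContinuousLinearMap.inr ℝ ℝ E))
      (s := Set.univ) (C := M)
      (fun w _ => (hasFDerivAt_partial f hf _ w).hasFDerivWithinAt)
      (fun w _ => by
        refine ContinuousLinearMap.opNorm_le_bound _ hMpos.le fun k => ?_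
        have hrfl : (fderiv ℝ f ((t:ℝ), w)).comp (ContinuousLinearMap.inr ℝ ℝ E) k
            = fderiv ℝ f ((t:ℝ), w) ((0:ℝ), k) := rfl
        rw [hrfl]
        calc ‖fderiv ℝ f ((t:ℝ), w) ((0:ℝ), k)‖ ≤ φ (t:ℝ) * ‖k‖ := hkey _ t.2.1 _ _
          _ ≤ M * ‖k‖ := mul_le_mul_of_nonneg_right (hφM t) (norm_nonneg _))
      convex_univ (Set.mem_univ (u' t)) (Set.mem_univ (u t))
    calc ‖f ((t:ℝ), u t) - f ((t:ℝ), u' t)‖ ≤ M * ‖u t - u' t‖ := hmv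
      _ ≤ M * ‖u - u'‖ :=
        mul_le_mul_of_nonneg_left ((u - u').norm_coe_le_norm t) hMpos.le
  have hIntNorm : ∀ w : C(Set.Icc (0:ℝ) τ, E), ‖intL hτ.le w‖ ≤ τ * ‖w‖ := fun w =>
    le_trans ((intL hτ.le).le_opNorm w)
      (mul_le_mul_of_nonneg_right (intL_norm_le hτ.le) (norm_nonneg _))
  -- the fixed-point map and its fixed point
  set T : C(Set.Icc (0:ℝ) τ, E) → C(Set.Icc (0:ℝ) τ, E) :=
    fun u => constL x₀ + intL hτ.le (N u) + vres with hTdef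
  have hTlip : ∀ u u', dist (T u) (T u') ≤ (1/2 : ℝ) * dist u u' := by
    intro u u'
    rw [dist_eq_norm, dist_eq_norm]
    have hdiff : T u - T u' = intL hτ.le (N u) - intL hτ.le (N u') := by
      rw [hTdef]; simp only [add_sub_add_right_eq_sub, add_sub_add_left_eq_sub]
    rw [hdiff, ← map_sub]
    calc ‖intL hτ.le (N u - N u')‖ ≤ τ * ‖N u - N u'‖ := hIntNorm _
      _ ≤ τ * (M * ‖u - u'‖) := mul_le_mul_of_nonneg_left (hNlip u u') hτ.le
      _ = (τ * M) * ‖u - u'‖ := by ring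
      _ = (1/2 : ℝ) * ‖u - u'‖ := by rw [hτM]
  have hcontr : ContractingWith (1/2 : NNReal) T := by
    constructor
    · rw [← NNReal.coe_lt_coe]; norm_num
    · apply LipschitzWith.of_dist_le_mul
      intro u u'
      have := hTlip u u'
      have hco : ((1/2 : NNReal) : ℝ) = (1/2 : ℝ) := by norm_num
      rw [hco]
      exact this
  set u₀ : C(Set.Icc (0:ℝ) τ, E) := ContractingWith.fixedPoint T hcontr with hu₀def
  have hfix : T u₀ = u₀ := hcontr.fixedPoint_isFixedPt
  -- the global map whose local inverse provides solutions
  set F : E × C(Set.Icc (0:ℝ) τ, E) → E × C(Set.Icc (0:ℝ) τ, E) :=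
    fun p => (p.1, p.2 - (constL p.1 + intL hτ.le (N p.2)) - vres) with hFdef
  have hFp₀ : F (x₀, u₀) = (x₀, (0 : C(Set.Icc (0:ℝ) τ, E))) := by
    rw [hFdef]
    have h2 : u₀ - (constL x₀ + intL hτ.le (N u₀)) - vres = 0 := by
      rw [sub_sub, sub_eq_zero]
      rw [hTdef] at hfix
      exact hfix.symm
    simpa using h2
  -- the derivative and its inverse
  set A : C(Set.Icc (0:ℝ) τ, E) →L[ℝ] C(Set.Icc (0:ℝ) τ, E) :=
    (intL hτ.le).comp (compDer f hf u₀) with hAdef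
  have hA : ‖A‖ < 1 := by
    calc ‖A‖ ≤ ‖intL (E := E) hτ.le‖ * ‖compDer f hf u₀‖ :=
          ContinuousLinearMap.opNorm_comp_le _ _
      _ ≤ τ * M := mul_le_mul (intL_norm_le hτ.le) (hDer_bound u₀)
          (norm_nonneg (compDer f hf u₀)) hτ.le
      _ = 1/2 := hτM
      _ < 1 := by norm_num
  set U : (C(Set.Icc (0:ℝ) τ, E) →L[ℝ] C(Set.Icc (0:ℝ) τ, E))ˣ := Units.oneSub A hA with hUdef
  set B : C(Set.Icc (0:ℝ) τ, E) →L[ℝ] C(Set.Icc (0:ℝ) τ, E) := ↑U⁻¹ with hBdef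
  have hUval : (↑U : C(Set.Icc (0:ℝ) τ, E) →L[ℝ] C(Set.Icc (0:ℝ) τ, E)) = 1 - A := rfl
  have hmul1 : B * (1 - A) = 1 := by rw [← hUval]; exact U.inv_mul
  have hmul2 : (1 - A) * B = 1 := by rw [← hUval]; exact U.mul_inv
  have hB1 : ∀ k : C(Set.Icc (0:ℝ) τ, E), B (k - A k) = k := by
    intro k
    calc B (k - A k) = B ((1 - A) k) := by
          rw [ContinuousLinearMap.sub_apply, ContinuousLinearMap.one_apply]
      _ = (B * (1 - A)) k := rfl
      _ = k := by rw [hmul1]; rfl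
  have hB2 : ∀ k : C(Set.Icc (0:ℝ) τ, E), B k - A (B k) = k := by
    intro k
    calc B k - A (B k) = (1 - A) (B k) := by
          rw [ContinuousLinearMap.sub_apply, ContinuousLinearMap.one_apply]
      _ = ((1 - A) * B) k := rfl
      _ = k := by rw [hmul2]; rfl
  set Fl : (E × C(Set.Icc (0:ℝ) τ, E)) →L[ℝ] (E × C(Set.Icc (0:ℝ) τ, E)) :=
    (ContinuousLinearMap.fst ℝ E C(Set.Icc (0:ℝ) τ, E)).prod
      ((ContinuousLinearMap.snd ℝ E C(Set.Icc (0:ℝ) τ, E)) -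
        (constL.comp (ContinuousLinearMap.fst ℝ E C(Set.Icc (0:ℝ) τ, E)) +
          (intL hτ.le).comp ((compDer f hf u₀).comp
            (ContinuousLinearMap.snd ℝ E C(Set.Icc (0:ℝ) τ, E))))) with hFldef
  set Finv : (E × C(Set.Icc (0:ℝ) τ, E)) →L[ℝ] (E × C(Set.Icc (0:ℝ) τ, E)) :=
    (ContinuousLinearMap.fst ℝ E C(Set.Icc (0:ℝ) τ, E)).prod
      (B.comp ((ContinuousLinearMap.snd ℝ E C(Set.Icc (0:ℝ) τ, E)) +
        constL.comp (ContinuousLinearMap.fst ℝ E C(Set.Icc (0:ℝ) τ, E)))) with hFinvdef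
  have hFl_apply : ∀ p : E × C(Set.Icc (0:ℝ) τ, E),
      Fl p = (p.1, p.2 - (constL p.1 + intL hτ.le (compDer f hf u₀ p.2))) := by
    intro p
    rfl
  have hFinv_apply : ∀ q : E × C(Set.Icc (0:ℝ) τ, E),
      Finv q = (q.1, B (q.2 + constL q.1)) := by
    intro q
    rfl
  have hleft : Function.LeftInverse Finv Fl := by
    intro p
    rw [hFl_apply, hFinv_apply]
    have harr : p.2 - (constL p.1 + intL hτ.le (compDer f hf u₀ p.2)) + constL p.1
        = p.2 - A p.2 := by
      rw [hAdef]
      simp only [ContinuousLinearMap.comp_apply]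
      abel
    rw [harr, hB1]
  have hright : Function.RightInverse Finv Fl := by
    intro q
    rw [hFinv_apply, hFl_apply]
    have harr : B (q.2 + constL q.1) - (constL q.1 + intL hτ.le (compDer f hf u₀
        (B (q.2 + constL q.1)))) = (B (q.2 + constL q.1) - A (B (q.2 + constL q.1)))
          - constL q.1 := by
      rw [hAdef]
      simp only [ContinuousLinearMap.comp_apply]
      abel
    rw [harr, hB2]
    simp
  set F' : (E × C(Set.Icc (0:ℝ) τ, E)) ≃L[ℝ] (E × C(Set.Icc (0:ℝ) τ, E)) :=
    ContinuousLinearEquiv.equivOfInverse Fl Finv hleft hright with hF'def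
  have hF'coe : (F' : (E × C(Set.Icc (0:ℝ) τ, E)) →L[ℝ] (E × C(Set.Icc (0:ℝ) τ, E))) = Fl := ContinuousLinearMap.ext fun p => rfl
  -- F is C¹ with derivative Fl at (x₀, u₀)
  have hFcd : ContDiff ℝ 1 F := by
    rw [hFdef]
    have hc3 : ContDiff ℝ 1 (fun p : E × C(Set.Icc (0:ℝ) τ, E) => N p.2) :=
      (contDiff_compCM f hf).comp contDiff_snd
    have hc4 : ContDiff ℝ 1 (fun p : E × C(Set.Icc (0:ℝ) τ, E) => intL hτ.le (N p.2)) :=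
      (intL (E := E) hτ.le).contDiff.comp hc3
    have hc2 : ContDiff ℝ 1 (fun p : E × C(Set.Icc (0:ℝ) τ, E) => constL p.1) :=
      (constL (E := E) (τ := τ)).contDiff.comp contDiff_fst
    exact contDiff_fst.prodMk ((contDiff_snd.sub (hc2.add hc4)).sub contDiff_const)
  have hFderiv : HasFDerivAt F Fl (x₀, u₀) := by
    have h2 : HasFDerivAt (fun p : E × C(Set.Icc (0:ℝ) τ, E) => constL p.1)
        (constL.comp (ContinuousLinearMap.fst ℝ E C(Set.Icc (0:ℝ) τ, E))) (x₀, u₀) :=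
      (constL (E := E) (τ := τ)).hasFDerivAt.comp (x₀, u₀) hasFDerivAt_fst
    have h3 : HasFDerivAt (fun p : E × C(Set.Icc (0:ℝ) τ, E) => N p.2)
        ((compDer f hf u₀).comp (ContinuousLinearMap.snd ℝ E C(Set.Icc (0:ℝ) τ, E)))
        (x₀, u₀) := by
          have := (hasFDerivAt_compCM f hf u₀).comp (x₀, u₀)
            (hasFDerivAt_snd (𝕜 := ℝ) (p := (x₀, u₀)))
          exact this
    have h4 : HasFDerivAt (fun p : E × C(Set.Icc (0:ℝ) τ, E) => intL hτ.le (N p.2))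
        ((intL hτ.le).comp ((compDer f hf u₀).comp
          (ContinuousLinearMap.snd ℝ E C(Set.Icc (0:ℝ) τ, E)))) (x₀, u₀) :=
      (intL (E := E) hτ.le).hasFDerivAt.comp (x₀, u₀) h3
    have h5 := (hasFDerivAt_snd.sub (h2.add h4)).sub_const vres
    have h6 := hasFDerivAt_fst.prodMk h5
    rw [hFldef]
    exact h6
  have hFderiv' : HasFDerivAt F
      (F' : (E × C(Set.Icc (0:ℝ) τ, E)) →L[ℝ] (E × C(Set.Icc (0:ℝ) τ, E))) (x₀, u₀) := by
    rw [hF'coe]; exact hFderiv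
  have hstrict := hFcd.contDiffAt.hasStrictFDerivAt' hFderiv' one_ne_zero
  set G : E × C(Set.Icc (0:ℝ) τ, E) → E × C(Set.Icc (0:ℝ) τ, E) :=
    hFcd.contDiffAt.localInverse hFderiv' one_ne_zero with hGdef
  have hGcd : ContDiffAt ℝ 1 G (F (x₀, u₀)) := hFcd.contDiffAt.to_localInverse hFderiv' one_ne_zero
  have hGright : ∀ᶠ q in nhds (F (x₀, u₀)), F (G q) = q := hstrict.eventually_right_inverse
  have hGright' : ∀ᶠ x in nhds x₀,
      F (G (x, (0 : C(Set.Icc (0:ℝ) τ, E)))) = (x, (0 : C(Set.Icc (0:ℝ) τ, E))) := by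
    rw [hFp₀] at hGright
    have hc : Filter.Tendsto (fun x : E => (x, (0 : C(Set.Icc (0:ℝ) τ, E)))) (nhds x₀)
        (nhds (x₀, (0 : C(Set.Icc (0:ℝ) τ, E)))) :=
      (continuous_id.prodMk continuous_const).continuousAt
    exact hc.eventually hGright
  set Xfun : E → C(Set.Icc (0:ℝ) τ, E) := fun x => (G (x, 0)).2 with hXdef
  have hXcd : ContDiffAt ℝ 1 Xfun x₀ := by
    have h1 : ContDiffAt ℝ 1 (fun x : E => (x, (0 : C(Set.Icc (0:ℝ) τ, E)))) x₀ :=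
      (contDiff_id.prodMk contDiff_const).contDiffAt
    have h2 : ContDiffAt ℝ 1 G (x₀, (0 : C(Set.Icc (0:ℝ) τ, E))) := by
      rw [← hFp₀]; exact hGcd
    have h3 := h2.comp x₀ h1
    exact contDiff_snd.contDiffAt.comp x₀ h3
  obtain ⟨s, hs_nhds, hsCD⟩ := hXcd.contDiffOn le_rfl (by simp)
  set W : Set E := {x | F (G (x, (0 : C(Set.Icc (0:ℝ) τ, E))))
    = (x, (0 : C(Set.Icc (0:ℝ) τ, E)))} with hWdef
  have hW : W ∈ nhds x₀ := hGright'
  refine ⟨τ, hτ, interior (s ∩ W), isOpen_interior,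
    mem_interior_iff_mem_nhds.2 (Filter.inter_mem hs_nhds hW), Xfun,
    hsCD.mono (interior_subset.trans Set.inter_subset_left), ?_⟩
  intro x hx t
  have hxW : F (G (x, (0 : C(Set.Icc (0:ℝ) τ, E)))) = (x, (0 : C(Set.Icc (0:ℝ) τ, E))) :=
    (interior_subset hx).2
  have h1 : (G (x, (0 : C(Set.Icc (0:ℝ) τ, E)))).1 = x := by
    have := congrArg Prod.fst hxW
    rw [hFdef] at this
    exact this
  have h2 : (G (x, 0)).2 - (constL (G (x, 0)).1 + intL hτ.le (N (G (x, 0)).2)) - vres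
      = (0 : C(Set.Icc (0:ℝ) τ, E)) := by
    have := congrArg Prod.snd hxW
    rw [hFdef] at this
    exact this
  rw [h1] at h2
  have h3 : (G (x, 0)).2 = constL x + intL hτ.le (N (G (x, 0)).2) + vres := by
    have h4 := sub_eq_iff_eq_add.mp (sub_eq_zero.mp h2)
    conv_lhs => rw [h4]
    abel
  have h5 := congrArg (fun w : C(Set.Icc (0:ℝ) τ, E) => w t) h3
  simp only [ContinuousMap.add_apply, constL_apply, intL_apply] at h5
  have hint : (∫ s in (0:ℝ)..(t:ℝ), (N (G (x, 0)).2) (Set.projIcc 0 τ hτ.le s))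
      = ∫ s in (0:ℝ)..(t:ℝ), f (s, (G (x, 0)).2 (Set.projIcc 0 τ hτ.le s)) := by
    apply intervalIntegral.integral_congr
    intro s hs
    rw [Set.uIcc_of_le t.2.1] at hs
    have hsmem : s ∈ Set.Icc (0:ℝ) τ := ⟨hs.1, le_trans hs.2 t.2.2⟩
    have hproj : ((Set.projIcc 0 τ hτ.le s : Set.Icc (0:ℝ) τ) : ℝ) = s := by
      rw [Set.projIcc_of_mem hτ.le hsmem]
    simp only [hNdef, compCM_apply, hproj]
  rw [hint] at h5
  exact h5
end
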